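/- Suppose Γ is a vertex-transitive graph with connectivity one whose blocks are vertex-transitive, pairwise isomorphic, and each has at least three vertices. Then for any block Λ of Γ, every automorphism of Λ extends to an automorphism of Γ; that is, the group induced on VΛ by the setwise stabiliser (Aut Γ)_{{Λ}} equals Aut Λ. -/

import Mathlib

open Pointwise

/-- A permutation preserves a directed edge relation. -/
def DPreserves {V : Type*} (E : V → V → Prop) (g : Equiv.Perm V) : Prop :=
  ∀ a b : V, E (g a) (g b) ↔ E a b

/-- The automorphism group of the directed graph with edge relation `E`,
as a subgroup of the symmetric group. -/
def autSub {V : Type*} (E : V → V → Prop) : Subgroup (Equiv.Perm V) where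
  carrier := {g | DPreserves E g}
  one_mem' := fun _ _ => Iff.rfl
  mul_mem' := by
    intro g h hg hh a b
    exact (hg (h a) (h b)).trans (hh a b)
  inv_mem' := by
    intro g hg a b
    simpa using (hg (g⁻¹ a) (g⁻¹ b)).symm

/-- A subgroup of the symmetric group acts primitively: it is transitive and the only
invariant equivalence relations are the trivial and the universal ones. -/
def IsPrimitiveSub {X : Type*} (G : Subgroup (Equiv.Perm X)) : Prop :=
  (∀ a b : X, ∃ g ∈ G, g a = b) ∧
    ∀ r : Setoid X, (∀ g ∈ G, ∀ a b : X, r.r a b ↔ r.r (g a) (g b)) →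
      (∀ a b : X, r.r a b ↔ a = b) ∨ ∀ a b : X, r.r a b

/-- A subgroup of the symmetric group acts regularly: transitively with trivial
point stabilisers. -/
def IsRegularSub {X : Type*} (G : Subgroup (Equiv.Perm X)) : Prop :=
  (∀ a b : X, ∃ g ∈ G, g a = b) ∧ ∀ g ∈ G, ∀ a : X, g a = a → g = 1

/-- `a` is a cut vertex of `Γ`: deleting it disconnects the graph. -/
def IsCutVertexOf {V : Type*} (Γ : SimpleGraph V) (a : V) : Prop :=
  ¬ (Γ.induce {v | v ≠ a}).Preconnected

/-- `Γ` is connected and has connectivity one. -/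
def HasConnOne {V : Type*} (Γ : SimpleGraph V) : Prop :=
  Γ.Connected ∧ ∃ a, IsCutVertexOf Γ a

/-- `B` is (the vertex set of) a block of `Γ`: a connected induced subgraph with no cut
vertex of its own, maximal with these properties. -/
def IsBlockOf {V : Type*} (Γ : SimpleGraph V) (B : Set V) : Prop :=
  (Γ.induce B).Connected ∧ (∀ b ∈ B, (Γ.induce (B \ {b})).Preconnected) ∧
    ∀ C : Set V, B ⊆ C → (Γ.induce C).Connected →
      (∀ c ∈ C, (Γ.induce (C \ {c})).Preconnected) → B = C

/-- Vertex type of the block-cut-vertex tree: cut vertices plus blocks. -/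
def BCVertex {V : Type*} (Γ : SimpleGraph V) : Type _ :=
  {a : V // IsCutVertexOf Γ a} ⊕ {B : Set V // IsBlockOf Γ B}

/-- The block-cut-vertex tree: a cut vertex is adjacent to the blocks containing it. -/
def bcTree {V : Type*} (Γ : SimpleGraph V) : SimpleGraph (BCVertex Γ) :=
  SimpleGraph.fromRel (fun x y =>
    ∃ (a : {a : V // IsCutVertexOf Γ a}) (B : {B : Set V // IsBlockOf Γ B}),
      x = Sum.inl a ∧ y = Sum.inr B ∧ (a : V) ∈ (B : Set V))

/-- The stabiliser (in the full symmetric group) of a vertex of the block-cut-vertex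
tree: the point stabiliser for a cut vertex, the setwise stabiliser for a block. -/
def bcStab {V : Type*} {Γ : SimpleGraph V} (x : BCVertex Γ) : Subgroup (Equiv.Perm V) :=
  match x with
  | Sum.inl a => MulAction.stabilizer (Equiv.Perm V) (a : V)
  | Sum.inr B => MulAction.stabilizer (Equiv.Perm V) (B : Set V)

/-- `z` lies on a geodesic between `a` and `b`. -/
def OnGeodesic {W : Type*} (T : SimpleGraph W) (a b z : W) : Prop :=
  T.dist a z + T.dist z b = T.dist a b

/-- `a` and `b` lie in the same connected component of `T` with the vertex `y` deleted. -/
def SameCompAvoiding {W : Type*} (T : SimpleGraph W) (y a b : W) : Prop :=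
  ∃ (ha : a ≠ y) (hb : b ≠ y), (T.induce {v | v ≠ y}).Reachable ⟨a, ha⟩ ⟨b, hb⟩

/-- `B` and `C` are isomorphic as directed graphs (with edge relation `E`). -/
def BlocksIsomorphic {V : Type*} (E : V → V → Prop) (B C : Set V) : Prop :=
  ∃ e : B ≃ C, ∀ a b : B, E (a : V) (b : V) ↔ E (e a : V) (e b : V)

/-- The automorphism group of the directed graph induced on `B`. -/
def BlockAut {V : Type*} (E : V → V → Prop) (B : Set V) : Subgroup (Equiv.Perm B) :=
  autSub (fun a b : B => E (a : V) (b : V))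

/-- `B` has at least three vertices. -/
def HasThreeVertices {V : Type*} (B : Set V) : Prop :=
  ∃ x y z : V, x ∈ B ∧ y ∈ B ∧ z ∈ B ∧ x ≠ y ∧ x ≠ z ∧ y ≠ z

/-- Primitivity for an abstract group action: transitivity, and the only invariant
equivalence relations are the trivial and the universal ones. -/
def IsPrimAction (G Ω : Type*) [Group G] [MulAction G Ω] : Prop :=
  MulAction.IsPretransitive G Ω ∧
    ∀ r : Setoid Ω, (∀ (g : G) (a b : Ω), r.r a b ↔ r.r (g • a) (g • b)) →
      (∀ a b : Ω, r.r a b ↔ a = b) ∨ ∀ a b : Ω, r.r a b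



section Helpers
variable {V : Type*} {Γ : SimpleGraph V}

/-- Inclusion hom between induced subgraphs. -/
def inclHom {X Y : Set V} (h : X ⊆ Y) : Γ.induce X →g Γ.induce Y :=
  ⟨fun v => ⟨v.1, h v.2⟩, fun {_ _} hab => hab⟩

/-- Hom from an induced subgraph to the ambient graph. -/
def valHom (X : Set V) : Γ.induce X →g Γ :=
  ⟨Subtype.val, fun {_ _} hab => hab⟩

lemma reach_mono {X Y : Set V} (h : X ⊆ Y) {a b : V} (ha : a ∈ X) (hb : b ∈ X)
    (hr : (Γ.induce X).Reachable ⟨a, ha⟩ ⟨b, hb⟩) :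
    (Γ.induce Y).Reachable ⟨a, h ha⟩ ⟨b, h hb⟩ :=
  hr.map (inclHom h)

lemma precon_union {X Y : Set V} (hX : (Γ.induce X).Preconnected)
    (hY : (Γ.induce Y).Preconnected) {w : V} (hwX : w ∈ X) (hwY : w ∈ Y) :
    (Γ.induce (X ∪ Y)).Preconnected := by
  intro u v
  have key : ∀ z : (X ∪ Y : Set V), (Γ.induce (X ∪ Y)).Reachable z ⟨w, Or.inl hwX⟩ := by
    rintro ⟨z, hz | hz⟩
    · exact reach_mono Set.subset_union_left hz hwX (hX ⟨z, hz⟩ ⟨w, hwX⟩)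
    · exact reach_mono Set.subset_union_right hz hwY (hY ⟨z, hz⟩ ⟨w, hwY⟩)
  exact (key u).trans (key v).symm

lemma reach_of_walk {a b : V} (W : Γ.Walk a b) {Y : Set V}
    (h : ∀ v ∈ W.support, v ∈ Y) :
    (Γ.induce Y).Reachable ⟨a, h a W.start_mem_support⟩ ⟨b, h b W.end_mem_support⟩ := by
  induction W with
  | nil => rfl
  | @cons u x y hadj p ih =>
      have hu : u ∈ Y := h u (SimpleGraph.Walk.start_mem_support _)
      have hx : x ∈ Y := h x (by simp)
      have h' : ∀ v ∈ p.support, v ∈ Y := fun v hv => h v (by simp [hv])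
      have : (Γ.induce Y).Adj ⟨u, hu⟩ ⟨x, hx⟩ := hadj
      exact (this.reachable).trans (ih h')

lemma support_subset_of_induce_walk {S : Set V} {x y : ↥S} (W : (Γ.induce S).Walk x y) :
    ∃ W' : Γ.Walk (x : V) (y : V), ∀ v ∈ W'.support, v ∈ S := by
  refine ⟨W.map (valHom S), ?_⟩
  intro v hv
  replace hv : v ∈ (W.map (valHom S)).support := hv
  rw [SimpleGraph.Walk.support_map] at hv
  obtain ⟨z, _, rfl⟩ := List.mem_map.mp hv
  exact z.2

lemma precon_of_subsingleton {X : Set V} (h : X.Subsingleton) :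
    (Γ.induce X).Preconnected := by
  intro u v
  have : u = v := Subtype.ext (h u.2 v.2)
  rw [this]

end Helpers

section BlockBasics
variable {V : Type*} (Γ : SimpleGraph V)

/-- Connected and no cut vertex: the defining properties of pre-blocks. -/
def GoodSet (X : Set V) : Prop :=
  (Γ.induce X).Connected ∧ ∀ b ∈ X, (Γ.induce (X \ {b})).Preconnected

variable {Γ}

lemma GoodSet.nonempty {X : Set V} (h : GoodSet Γ X) : X.Nonempty := by
  have := h.1.nonempty
  exact Set.nonempty_coe_sort.mp this

lemma GoodSet.delPrecon {X : Set V} (h : GoodSet Γ X) (v : V) :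
    (Γ.induce (X \ {v})).Preconnected := by
  by_cases hv : v ∈ X
  · exact h.2 v hv
  · rw [Set.diff_singleton_eq_self hv]
    exact h.1.preconnected

lemma IsBlockOf.goodSet {B : Set V} (h : IsBlockOf Γ B) : GoodSet Γ B := ⟨h.1, h.2.1⟩

lemma GoodSet.union {X Y : Set V} (hX : GoodSet Γ X) (hY : GoodSet Γ Y)
    {p q : V} (hpX : p ∈ X) (hpY : p ∈ Y) (hqX : q ∈ X) (hqY : q ∈ Y)
    (hpq : p ≠ q) : GoodSet Γ (X ∪ Y) := by
  constructor
  · exact (SimpleGraph.connected_iff _).mpr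
      ⟨precon_union hX.1.preconnected hY.1.preconnected hpX hpY, ⟨⟨p, Or.inl hpX⟩⟩⟩
  · intro b _
    rw [Set.union_diff_distrib]
    have hpqb : p ≠ b ∨ q ≠ b := by
      by_contra h
      push_neg at h
      exact hpq (h.1.trans h.2.symm)
    rcases hpqb with hw | hw
    · exact precon_union (hX.delPrecon b) (hY.delPrecon b) ⟨hpX, hw⟩ ⟨hpY, hw⟩
    · exact precon_union (hX.delPrecon b) (hY.delPrecon b) ⟨hqX, hw⟩ ⟨hqY, hw⟩

/-- Every good set extends to a block (Zorn). -/
lemma GoodSet.exists_block {X : Set V} (hX : GoodSet Γ X) :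
    ∃ B : Set V, IsBlockOf Γ B ∧ X ⊆ B := by
  have hchains : ∀ c ⊆ {Y | GoodSet Γ Y}, IsChain (fun x1 x2 => x1 ⊆ x2) c →
      c.Nonempty → ∃ ub ∈ {Y | GoodSet Γ Y}, ∀ s ∈ c, s ⊆ ub := by
    intro c hcS hchain hcne
    refine ⟨⋃₀ c, ?_, fun s hs => Set.subset_sUnion_of_mem hs⟩
    obtain ⟨Y0, hY0⟩ := hcne
    have hY0g : GoodSet Γ Y0 := hcS hY0
    have hkey : ∀ (b : V) (u v : V), u ∈ ⋃₀ c → v ∈ ⋃₀ c → u ≠ b → v ≠ b →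
        ∃ (hu : u ∈ ⋃₀ c \ {b}) (hv : v ∈ ⋃₀ c \ {b}),
          (Γ.induce (⋃₀ c \ {b})).Reachable ⟨u, hu⟩ ⟨v, hv⟩ := by
      intro b u v hu hv hub hvb
      obtain ⟨Y1, hY1c, hu1⟩ := hu
      obtain ⟨Y2, hY2c, hv2⟩ := hv
      rcases hchain.total hY1c hY2c with h12 | h21
      · have hg : GoodSet Γ Y2 := hcS hY2c
        have hr := hg.delPrecon b ⟨u, h12 hu1, hub⟩ ⟨v, hv2, hvb⟩
        have hsub : Y2 \ {b} ⊆ ⋃₀ c \ {b} :=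
          Set.diff_subset_diff_left (Set.subset_sUnion_of_mem hY2c)
        exact ⟨_, _, reach_mono hsub _ _ hr⟩
      · have hg : GoodSet Γ Y1 := hcS hY1c
        have hr := hg.delPrecon b ⟨u, hu1, hub⟩ ⟨v, h21 hv2, hvb⟩
        have hsub : Y1 \ {b} ⊆ ⋃₀ c \ {b} :=
          Set.diff_subset_diff_left (Set.subset_sUnion_of_mem hY1c)
        exact ⟨_, _, reach_mono hsub _ _ hr⟩
    constructor
    · refine (SimpleGraph.connected_iff _).mpr ⟨?_, ?_⟩
      · rintro ⟨u, hu⟩ ⟨v, hv⟩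
        obtain ⟨Y1, hY1c, hu1⟩ := hu
        obtain ⟨Y2, hY2c, hv2⟩ := hv
        rcases hchain.total hY1c hY2c with h12 | h21
        · exact reach_mono (Set.subset_sUnion_of_mem hY2c) _ _
            ((hcS hY2c).1.preconnected ⟨u, h12 hu1⟩ ⟨v, hv2⟩)
        · exact reach_mono (Set.subset_sUnion_of_mem hY1c) _ _
            ((hcS hY1c).1.preconnected ⟨u, hu1⟩ ⟨v, h21 hv2⟩)
      · obtain ⟨x, hx⟩ := hY0g.nonempty
        exact ⟨⟨x, Y0, hY0, hx⟩⟩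
    · rintro b _ ⟨u, hu, hub⟩ ⟨v, hv, hvb⟩
      obtain ⟨hu', hv', hr⟩ := hkey b u v hu hv hub hvb
      exact hr
  obtain ⟨m, hXm, hm⟩ := zorn_subset_nonempty {Y | GoodSet Γ Y} hchains X hX
  refine ⟨m, ⟨hm.prop.1, hm.prop.2, ?_⟩, hXm⟩
  intro C hmC hC1 hC2
  exact hm.eq_of_subset ⟨hC1, hC2⟩ hmC

/-- Two blocks sharing two distinct vertices coincide. -/
lemma block_eq_block {B C : Set V} (hB : IsBlockOf Γ B) (hC : IsBlockOf Γ C)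
    {p q : V} (hpB : p ∈ B) (hpC : p ∈ C) (hqB : q ∈ B) (hqC : q ∈ C)
    (hpq : p ≠ q) : B = C := by
  have hU : GoodSet Γ (B ∪ C) := hB.goodSet.union hC.goodSet hpB hpC hqB hqC hpq
  have h1 : B = B ∪ C := hB.2.2 _ Set.subset_union_left hU.1 hU.2
  have h2 : C ⊆ B := by rw [h1]; exact Set.subset_union_right
  exact (hC.2.2 B h2 hB.1 hB.2.1).symm

/-- Every edge lies in some block. -/
lemma exists_block_of_adj {a b : V} (hab : Γ.Adj a b) :
    ∃ B : Set V, IsBlockOf Γ B ∧ a ∈ B ∧ b ∈ B := by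
  have hgood : GoodSet Γ {a, b} := by
    constructor
    · refine (SimpleGraph.connected_iff _).mpr ⟨?_, ?_⟩
      · rintro ⟨u, hu⟩ ⟨v, hv⟩
        have hadj : (Γ.induce ({a, b} : Set V)).Adj
            ⟨a, by simp⟩ ⟨b, by simp⟩ := hab
        have hru : ∀ (u : ({a, b} : Set V)),
            (Γ.induce ({a, b} : Set V)).Reachable u ⟨a, by simp⟩ := by
          rintro ⟨u, hu⟩
          simp only [Set.mem_insert_iff, Set.mem_singleton_iff] at hu
          rcases hu with rfl | rfl
          · rfl
          · exact hadj.symm.reachable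
        exact (hru ⟨u, hu⟩).trans (hru ⟨v, hv⟩).symm
      · exact ⟨⟨a, by simp⟩⟩
    · intro v hv
      have hne := hab.ne
      refine precon_of_subsingleton ?_
      rintro x ⟨hx, hxv⟩ y ⟨hy, hyv⟩
      simp only [Set.mem_insert_iff, Set.mem_singleton_iff] at hx hy hv
      simp only [Set.mem_singleton_iff] at hxv hyv
      rcases hv with rfl | rfl <;> rcases hx with rfl | rfl <;>
        rcases hy with rfl | rfl <;> simp_all
  obtain ⟨B, hB, hsub⟩ := hgood.exists_block
  exact ⟨B, hB, hsub (by simp), hsub (by simp)⟩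

/-- A connected graph has an edge leaving any nonempty proper subset. -/
lemma exists_boundary_edge (hpre : Γ.Preconnected) {S : Set V}
    (hne : S.Nonempty) (hproper : S ≠ Set.univ) :
    ∃ y z, y ∈ S ∧ z ∉ S ∧ Γ.Adj y z := by
  obtain ⟨s, hs⟩ := hne
  obtain ⟨v, hv⟩ : ∃ v, v ∉ S := by
    by_contra h
    push_neg at h
    exact hproper (Set.eq_univ_of_forall h)
  obtain ⟨W⟩ := hpre s v
  clear hproper
  induction W with
  | nil => exact absurd hs hv
  | @cons u x y hadj p ih =>
      by_cases hx : x ∈ S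
      · exact ih hx hv
      · exact ⟨u, x, hs, hx, hadj⟩
end BlockBasics

section Transport
variable {V : Type*} {E : V → V → Prop}

lemma DPreserves.inv {g : Equiv.Perm V} (hg : DPreserves E g) : DPreserves E g⁻¹ := by
  intro a b
  simpa using (hg (g⁻¹ a) (g⁻¹ b)).symm

lemma adj_transport {g : Equiv.Perm V} (hg : DPreserves E g) (a b : V) :
    (SimpleGraph.fromRel E).Adj (g a) (g b) ↔ (SimpleGraph.fromRel E).Adj a b := by
  rw [SimpleGraph.fromRel_adj, SimpleGraph.fromRel_adj]
  constructor
  · rintro ⟨hne, h⟩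
    exact ⟨fun h' => hne (h' ▸ rfl), by rw [← hg a b, ← hg b a]; exact h⟩
  · rintro ⟨hne, h⟩
    exact ⟨fun h' => hne (g.injective h'), by rw [hg a b, hg b a]; exact h⟩

/-- The induced-subgraph isomorphism coming from an automorphism. -/
def permIso (g : Equiv.Perm V) (hg : DPreserves E g) (X : Set V) :
    (SimpleGraph.fromRel E).induce X ≃g (SimpleGraph.fromRel E).induce (⇑g '' X) where
  toEquiv := g.image X
  map_rel_iff' := by
    intro a b
    exact adj_transport hg a.1 b.1

lemma IsBlockOf.image {g : Equiv.Perm V} (hg : DPreserves E g) {B : Set V}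
    (hB : IsBlockOf (SimpleGraph.fromRel E) B) :
    IsBlockOf (SimpleGraph.fromRel E) (⇑g '' B) := by
  refine ⟨((permIso g hg B).connected_iff).mp hB.1, ?_, ?_⟩
  · rintro c ⟨b, hbB, rfl⟩
    have : ⇑g '' B \ {g b} = ⇑g '' (B \ {b}) := by
      rw [Set.image_diff g.injective, Set.image_singleton]
    rw [this]
    exact ((permIso g hg (B \ {b})).preconnected_iff).mp (hB.2.1 b hbB)
  · intro C hsub hC1 hC2
    have hsub' : B ⊆ ⇑g⁻¹ '' C := by
      intro b hb
      exact ⟨g b, hsub ⟨b, hb, rfl⟩, by simp⟩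
    have hC'img : ⇑g '' (⇑g⁻¹ '' C) = C := by simp
    have h1 : (SimpleGraph.fromRel E).induce (⇑g⁻¹ '' C) |>.Connected := by
      have := (permIso g hg (⇑g⁻¹ '' C)).connected_iff
      rw [hC'img] at this
      exact this.mpr hC1
    have h2 : ∀ c ∈ ⇑g⁻¹ '' C,
        ((SimpleGraph.fromRel E).induce ((⇑g⁻¹ '' C) \ {c})).Preconnected := by
      intro c hc
      have : ⇑g '' ((⇑g⁻¹ '' C) \ {c}) = C \ {g c} := by
        rw [Set.image_diff g.injective, Set.image_singleton, hC'img]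
      have hiso := (permIso g hg ((⇑g⁻¹ '' C) \ {c})).preconnected_iff
      rw [this] at hiso
      refine hiso.mpr (hC2 (g c) ?_)
      obtain ⟨c', hc', rfl⟩ := hc
      simpa using hc'
    have := hB.2.2 _ hsub' h1 h2
    rw [this, hC'img]

/-- Block-star equivalence induced by an automorphism. -/
def blockStarEquiv (g : Equiv.Perm V) (hg : DPreserves E g) (a : V) :
    {B : Set V // IsBlockOf (SimpleGraph.fromRel E) B ∧ a ∈ B} ≃
    {B : Set V // IsBlockOf (SimpleGraph.fromRel E) B ∧ g a ∈ B} where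
  toFun := fun ⟨B, hB, haB⟩ => ⟨⇑g '' B, hB.image hg, ⟨a, haB, rfl⟩⟩
  invFun := fun ⟨B, hB, haB⟩ => ⟨⇑g⁻¹ '' B, hB.image hg.inv, ⟨g a, haB, by simp⟩⟩
  left_inv := by rintro ⟨B, hB, haB⟩; ext1; simp
  right_inv := by rintro ⟨B, hB, haB⟩; ext1; simp

end Transport

section NC
variable {V : Type*} {Γ : SimpleGraph V}

lemma precon_support {a b : V} (W : Γ.Walk a b) :
    (Γ.induce {v | v ∈ W.support}).Preconnected := by
  classical
  have key : ∀ u : {v | v ∈ W.support},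
      (Γ.induce {v | v ∈ W.support}).Reachable u ⟨a, W.start_mem_support⟩ := by
    rintro ⟨u, hu⟩
    exact (reach_of_walk (W.takeUntil u hu)
      (fun v hv => SimpleGraph.Walk.support_takeUntil_subset _ _ hv)).symm
  intro u v
  exact (key u).trans (key v).symm

/-- In a path, a vertex other than `u` avoids one of the two segments cut at `u`. -/
lemma path_avoid [DecidableEq V] {x y : V} {p : Γ.Walk x y} (hp : p.IsPath) {u v : V}
    (hu : u ∈ p.support) (hvu : v ≠ u) :
    ¬ (v ∈ (p.takeUntil u hu).support ∧ v ∈ (p.dropUntil u hu).support) := by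
  classical
  rintro ⟨hv1, hv2⟩
  have hspec := p.take_spec hu
  have hnd : p.support.Nodup := hp.support_nodup
  rw [← hspec, SimpleGraph.Walk.support_append] at hnd
  have hdisj := List.disjoint_of_nodup_append hnd
  have hv2' : v ∈ (p.dropUntil u hu).support.tail := by
    have hcons := (p.dropUntil u hu).support_eq_cons
    have hmem : v ∈ u :: (p.dropUntil u hu).support.tail := hcons ▸ hv2
    rcases List.mem_cons.mp hmem with h | h
    · exact absurd h hvu
    · exact h
  exact hdisj hv1 hv2'

/-- The no-block-cycle lemma: if `S` is connected and block-closed, `B` a block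
meeting `S` exactly in `c0`, and `D` a block containing a vertex `q ∈ B \ S` and a
vertex `s ∈ S`, then `D = B`. -/
lemma block_cycle_free {S B D : Set V} {c0 q s : V}
    (hSpre : (Γ.induce S).Preconnected)
    (hB : IsBlockOf Γ B) (hD : IsBlockOf Γ D)
    (hc0B : c0 ∈ B) (hc0S : c0 ∈ S)
    (hqB : q ∈ B) (hqD : q ∈ D) (hqS : q ∉ S)
    (hsD : s ∈ D) (hsS : s ∈ S) : D = B := by
  classical
  have hqc0 : q ≠ c0 := fun h => hqS (h ▸ hc0S)
  have hsq : s ≠ q := fun h => hqS (h ▸ hsS)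
  -- a path from s to c0 inside S
  obtain ⟨W', hW'⟩ := support_subset_of_induce_walk
    ((hSpre ⟨s, hsS⟩ ⟨c0, hc0S⟩).some)
  set p : Γ.Walk s c0 := (W'.toPath).1 with hpdef
  have hp : p.IsPath := (W'.toPath).2
  have hsupp : ∀ v ∈ p.support, v ∈ S := by
    intro v hv
    exact hW' v (SimpleGraph.Walk.support_toPath_subset W' hv)
  set SS : Set V := {v | v ∈ p.support} with hSSdef
  set X : Set V := (B ∪ D) ∪ SS with hXdef
  have hsSS : s ∈ SS := p.start_mem_support
  have hc0SS : c0 ∈ SS := p.end_mem_support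
  have hqSS : q ∉ SS := fun h => hqS (hsupp q h)
  have hBX : B ⊆ X := fun x hx => Or.inl (Or.inl hx)
  have hDX : D ⊆ X := fun x hx => Or.inl (Or.inr hx)
  have hSSX : SS ⊆ X := fun x hx => Or.inr hx
  -- segment claim
  have seg : ∀ v, ∀ u ∈ SS, u ≠ v → ∃ t, (t = s ∨ t = c0) ∧ t ≠ v ∧
      ∃ (h1 : u ∈ SS \ {v}) (h2 : t ∈ SS \ {v}),
        (Γ.induce (SS \ {v})).Reachable ⟨u, h1⟩ ⟨t, h2⟩ := by
    intro v u huSS huv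
    have hu : u ∈ p.support := huSS
    by_cases hv1 : v ∈ (p.takeUntil u hu).support
    · -- use the second segment, towards c0
      have hv2 : v ∉ (p.dropUntil u hu).support := by
        by_cases hvu : v = u
        · subst hvu; exact absurd hv1 (absurd rfl huv)
        · exact fun h => path_avoid hp hu hvu ⟨hv1, h⟩
      have hsub : ∀ w ∈ (p.dropUntil u hu).support, w ∈ SS \ {v} := by
        intro w hw
        refine ⟨SimpleGraph.Walk.support_dropUntil_subset _ _ hw, ?_⟩
        intro hwv
        have hwv' : w = v := hwv
        exact hv2 (hwv' ▸ hw)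
      have hr := reach_of_walk (p.dropUntil u hu) hsub
      have hc0v : c0 ≠ v := by
        intro h
        exact hv2 (h ▸ (p.dropUntil u hu).end_mem_support)
      exact ⟨c0, Or.inr rfl, hc0v, _, _, hr⟩
    · have hsub : ∀ w ∈ (p.takeUntil u hu).support, w ∈ SS \ {v} := by
        intro w hw
        refine ⟨SimpleGraph.Walk.support_takeUntil_subset _ _ hw, fun hwv => hv1 (hwv ▸ hw)⟩
      have hr := (reach_of_walk (p.takeUntil u hu) hsub).symm
      have hsv : s ≠ v := by
        intro h
        exact hv1 (h ▸ (p.takeUntil u hu).start_mem_support)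
      exact ⟨s, Or.inl rfl, hsv, _, _, hr⟩
  have hgood : GoodSet Γ X := by
    constructor
    · refine (SimpleGraph.connected_iff _).mpr ⟨?_, ⟨⟨q, hBX hqB⟩⟩⟩
      have h1 : (Γ.induce (B ∪ D)).Preconnected :=
        precon_union hB.1.preconnected hD.1.preconnected hqB hqD
      have h2 := precon_union h1 (precon_support (p : Γ.Walk s c0))
        (Or.inr hsD) hsSS
      exact h2
    · intro v _
      -- reachability to a hub
      by_cases hvq : v = q
      · subst hvq
        -- hub s ; note v = v ∉ S so the path is untouched
        have hub_mem : s ∈ X \ {v} := ⟨hDX hsD, hsq⟩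
        have hc0q : c0 ≠ v := fun h => hqc0 h.symm
        have path_reach : ∃ (h1 : c0 ∈ SS \ {v}) (h2 : s ∈ SS \ {v}),
            (Γ.induce (SS \ {v})).Reachable ⟨c0, h1⟩ ⟨s, h2⟩ := by
          have hsub : ∀ w ∈ p.support, w ∈ SS \ {v} :=
            fun w hw => ⟨hw, fun h => hqSS (h ▸ hw)⟩
          exact ⟨_, _, (reach_of_walk p hsub).symm⟩
        have key : ∀ u, ∀ hu : u ∈ X \ {v},
            (Γ.induce (X \ {v})).Reachable ⟨u, hu⟩ ⟨s, hub_mem⟩ := by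
          rintro u ⟨hu, huq⟩
          have huq' : u ≠ v := huq
          have hSSsub : SS \ {v} ⊆ X \ {v} := Set.diff_subset_diff_left hSSX
          have hreach_c0s : (Γ.induce (X \ {v})).Reachable
              ⟨c0, ⟨hBX hc0B, hc0q⟩⟩ ⟨s, hub_mem⟩ := by
            obtain ⟨h1, h2, hr⟩ := path_reach
            exact reach_mono hSSsub h1 h2 hr
          rcases hu with (huB | huD) | huSS
          · -- inside B: reach to c0 within B \ {v}
            have hr := hB.goodSet.delPrecon v ⟨u, huB, huq'⟩ ⟨c0, hc0B, hc0q⟩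
            have hsub : B \ {v} ⊆ X \ {v} := Set.diff_subset_diff_left hBX
            exact (reach_mono hsub _ _ hr).trans hreach_c0s
          · have hr := hD.goodSet.delPrecon v ⟨u, huD, huq'⟩ ⟨s, hsD, hsq⟩
            have hsub : D \ {v} ⊆ X \ {v} := Set.diff_subset_diff_left hDX
            exact reach_mono hsub _ _ hr
          · obtain ⟨t, ht, htv, h1, h2, hr⟩ := seg v u huSS huq'
            have hrX := reach_mono hSSsub h1 h2 hr
            rcases ht with rfl | rfl
            · exact hrX
            · exact hrX.trans hreach_c0s
        intro x y
        exact (key x.1 x.2).trans (key y.1 y.2).symm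
      · -- hub q
        have hvq' : q ≠ v := fun h => hvq h.symm
        have hub_mem : q ∈ X \ {v} := ⟨hBX hqB, hvq'⟩
        have key : ∀ u, ∀ hu : u ∈ X \ {v},
            (Γ.induce (X \ {v})).Reachable ⟨u, hu⟩ ⟨q, hub_mem⟩ := by
          rintro u ⟨hu, huv⟩
          have huv' : u ≠ v := huv
          have hreach_s : ∀ (hs' : s ≠ v), (Γ.induce (X \ {v})).Reachable
              ⟨s, ⟨hDX hsD, hs'⟩⟩ ⟨q, hub_mem⟩ := by
            intro hs'
            have hr := hD.goodSet.delPrecon v ⟨s, hsD, hs'⟩ ⟨q, hqD, hvq'⟩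
            exact reach_mono (Set.diff_subset_diff_left hDX) _ _ hr
          have hreach_c0 : ∀ (hc' : c0 ≠ v), (Γ.induce (X \ {v})).Reachable
              ⟨c0, ⟨hBX hc0B, hc'⟩⟩ ⟨q, hub_mem⟩ := by
            intro hc'
            have hr := hB.goodSet.delPrecon v ⟨c0, hc0B, hc'⟩ ⟨q, hqB, hvq'⟩
            exact reach_mono (Set.diff_subset_diff_left hBX) _ _ hr
          rcases hu with (huB | huD) | huSS
          · have hr := hB.goodSet.delPrecon v ⟨u, huB, huv'⟩ ⟨q, hqB, hvq'⟩
            exact reach_mono (Set.diff_subset_diff_left hBX) _ _ hr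
          · have hr := hD.goodSet.delPrecon v ⟨u, huD, huv'⟩ ⟨q, hqD, hvq'⟩
            exact reach_mono (Set.diff_subset_diff_left hDX) _ _ hr
          · obtain ⟨t, ht, htv, h1, h2, hr⟩ := seg v u huSS huv'
            have hrX := reach_mono (Set.diff_subset_diff_left hSSX) h1 h2 hr
            rcases ht with rfl | rfl
            · exact hrX.trans (hreach_s htv)
            · exact hrX.trans (hreach_c0 htv)
        intro x y
        exact (key x.1 x.2).trans (key y.1 y.2).symm
  obtain ⟨F, hF, hXF⟩ := hgood.exists_block
  have hFB : F = B :=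
    block_eq_block hF hB (hXF (hBX hqB)) hqB (hXF (hBX hc0B)) hc0B hqc0
  have hFD : F = D :=
    block_eq_block hF hD (hXF (hBX hqB)) hqD (hXF (hDX hsD)) hsD hsq.symm
  rw [← hFD, hFB]

end NC

section Rooted
variable {V : Type*} {E : V → V → Prop}

lemma exists_rooted_iso
    (hiso : ∀ B C : Set V, IsBlockOf (SimpleGraph.fromRel E) B →
      IsBlockOf (SimpleGraph.fromRel E) C → BlocksIsomorphic E B C)
    (hbvt : ∀ B : Set V, IsBlockOf (SimpleGraph.fromRel E) B →
      ∀ a b : B, ∃ e ∈ BlockAut E B, e a = b)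
    {B C : Set V} (hB : IsBlockOf (SimpleGraph.fromRel E) B)
    (hC : IsBlockOf (SimpleGraph.fromRel E) C)
    {b c : V} (hb : b ∈ B) (hc : c ∈ C) :
    ∃ ψ : B ≃ C, (∀ x y : B, E (x : V) (y : V) ↔ E (ψ x : V) (ψ y : V)) ∧
      (ψ ⟨b, hb⟩ : V) = c := by
  obtain ⟨e0, he0⟩ := hiso B C hB hC
  obtain ⟨h, hmem, hh⟩ := hbvt C hC (e0 ⟨b, hb⟩) ⟨c, hc⟩
  refine ⟨e0.trans h, ?_, ?_⟩
  · intro x y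
    exact (he0 x y).trans (hmem (e0 x) (e0 y)).symm
  · rw [Equiv.trans_apply, hh]

lemma two_of_three {B : Set V} (h : HasThreeVertices B) :
    ∃ x y, x ∈ B ∧ y ∈ B ∧ x ≠ y := by
  obtain ⟨x, y, z, hx, hy, hz, hxy, hxz, hyz⟩ := h
  exact ⟨x, y, hx, hy, hxy⟩

lemma block_not_subset {B C : Set V} {Γ : SimpleGraph V} (hB : IsBlockOf Γ B)
    (hC : IsBlockOf Γ C) (h2 : ∃ x y, x ∈ B ∧ y ∈ B ∧ x ≠ y) (hne : B ≠ C) :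
    ¬ B ⊆ C := by
  intro hsub
  obtain ⟨x, y, hx, hy, hxy⟩ := h2
  exact hne (block_eq_block hB hC hx (hsub hx) hy (hsub hy) hxy)

variable (E)

/-- The type of blocks through a given vertex. -/
abbrev BlocksAt (a : V) : Type _ :=
  {B : Set V // IsBlockOf (SimpleGraph.fromRel E) B ∧ a ∈ B}

variable {E}

/-- Transitivity gives an equivalence between block stars at any two vertices. -/
noncomputable def starBij
    (hvt : ∀ a b : V, ∃ g : Equiv.Perm V, DPreserves E g ∧ g a = b)
    (a b : V) : BlocksAt E a ≃ BlocksAt E b := by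
  have h := hvt a b
  have hg : DPreserves E h.choose := h.choose_spec.1
  have hab : h.choose a = b := h.choose_spec.2
  exact hab ▸ blockStarEquiv h.choose hg a

/-- Block-star equivalence moving a designated block to a designated block. -/
noncomputable def starBijAt
    (hvt : ∀ a b : V, ∃ g : Equiv.Perm V, DPreserves E g ∧ g a = b)
    (a b : V) (Ba : BlocksAt E a) (Bb : BlocksAt E b) :
    BlocksAt E a ≃ BlocksAt E b := by
  classical
  exact (starBij hvt a b).trans (Equiv.swap ((starBij hvt a b) Ba) Bb)

lemma starBijAt_fix (hvt : ∀ a b : V, ∃ g : Equiv.Perm V, DPreserves E g ∧ g a = b)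
    (a b : V) (Ba : BlocksAt E a) (Bb : BlocksAt E b) :
    starBijAt hvt a b Ba Bb Ba = Bb := by
  classical
  simp [starBijAt]

/-- The family of matched pairs generated at a vertex pair. -/
noncomputable def pairsAt
    (hvt : ∀ a b : V, ∃ g : Equiv.Perm V, DPreserves E g ∧ g a = b)
    (a b : V) (Ba : BlocksAt E a) (Bb : BlocksAt E b) : Set (Set V × Set V) :=
  {m | ∃ h : IsBlockOf (SimpleGraph.fromRel E) m.1 ∧ a ∈ m.1,
    m.1 ≠ Ba.1 ∧ m.2 = (starBijAt hvt a b Ba Bb ⟨m.1, h⟩).1}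

variable {hvt : ∀ a b : V, ∃ g : Equiv.Perm V, DPreserves E g ∧ g a = b}
  {a b : V} {Ba : BlocksAt E a} {Bb : BlocksAt E b}

lemma pairsAt_props {m : Set V × Set V} (hm : m ∈ pairsAt hvt a b Ba Bb) :
    IsBlockOf (SimpleGraph.fromRel E) m.1 ∧ a ∈ m.1 ∧ m.1 ≠ Ba.1 ∧
    IsBlockOf (SimpleGraph.fromRel E) m.2 ∧ b ∈ m.2 ∧ m.2 ≠ Bb.1 := by
  obtain ⟨h, hne, heq⟩ := hm
  have h2 := (starBijAt hvt a b Ba Bb ⟨m.1, h⟩).2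
  refine ⟨h.1, h.2, hne, heq ▸ h2.1, heq ▸ h2.2, ?_⟩
  rw [heq]
  intro hcontra
  have h3 : starBijAt hvt a b Ba Bb ⟨m.1, h⟩ = Bb := Subtype.ext hcontra
  have h4 : starBijAt hvt a b Ba Bb ⟨m.1, h⟩ = starBijAt hvt a b Ba Bb Ba :=
    h3.trans (starBijAt_fix hvt a b Ba Bb).symm
  have h5 := (starBijAt hvt a b Ba Bb).injective h4
  exact hne (congrArg Subtype.val h5)

lemma pairsAt_fun {m m' : Set V × Set V} (hm : m ∈ pairsAt hvt a b Ba Bb)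
    (hm' : m' ∈ pairsAt hvt a b Ba Bb) (h1 : m.1 = m'.1) : m.2 = m'.2 := by
  obtain ⟨h, hne, heq⟩ := hm
  obtain ⟨h', hne', heq'⟩ := hm'
  rw [heq, heq']
  congr 2
  exact Subtype.ext h1

lemma pairsAt_inj {m m' : Set V × Set V} (hm : m ∈ pairsAt hvt a b Ba Bb)
    (hm' : m' ∈ pairsAt hvt a b Ba Bb) (h2 : m.2 = m'.2) : m.1 = m'.1 := by
  obtain ⟨h, hne, heq⟩ := hm
  obtain ⟨h', hne', heq'⟩ := hm'
  have : starBijAt hvt a b Ba Bb ⟨m.1, h⟩ = starBijAt hvt a b Ba Bb ⟨m'.1, h'⟩ :=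
    Subtype.ext (by rw [← heq, ← heq', h2])
  have := (starBijAt hvt a b Ba Bb).injective this
  exact congrArg Subtype.val this

lemma pairsAt_tot {D : Set V} (hD : IsBlockOf (SimpleGraph.fromRel E) D)
    (haD : a ∈ D) (hne : D ≠ Ba.1) :
    ∃ D', (D, D') ∈ pairsAt hvt a b Ba Bb :=
  ⟨(starBijAt hvt a b Ba Bb ⟨D, hD, haD⟩).1, ⟨hD, haD⟩, hne, rfl⟩

lemma pairsAt_surj {D' : Set V} (hD' : IsBlockOf (SimpleGraph.fromRel E) D')
    (hbD' : b ∈ D') (hne : D' ≠ Bb.1) :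
    ∃ D, (D, D') ∈ pairsAt hvt a b Ba Bb := by
  set x := (starBijAt hvt a b Ba Bb).symm ⟨D', hD', hbD'⟩ with hx
  refine ⟨x.1, x.2, ?_, ?_⟩
  · intro hcontra
    have hxBa : x = Ba := Subtype.ext hcontra
    have := congrArg (starBijAt hvt a b Ba Bb) hxBa
    rw [Equiv.apply_symm_apply, starBijAt_fix] at this
    exact hne (congrArg Subtype.val this)
  · show D' = _
    have : starBijAt hvt a b Ba Bb ⟨x.1, x.2⟩ = ⟨D', hD', hbD'⟩ := by
      rw [hx]
      exact (starBijAt hvt a b Ba Bb).apply_symm_apply _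
    rw [this]

end Rooted

section Main
variable {V : Type*} {E : V → V → Prop} {Λ : Set V} {e : Equiv.Perm ↥Λ}

/-- Image of a relation viewed as a partial function. -/
def imgF (F : Set (V × V)) : Set V := {y | ∃ x, (x, y) ∈ F}

variable (E Λ e) in
/-- A partial extension system. -/
structure IsSys (S : Set V) (F : Set (V × V)) (M : Set (Set V × Set V)) : Prop where
  (domF : ∀ p ∈ F, p.1 ∈ S)
  (totF : ∀ x ∈ S, ∃ y, (x, y) ∈ F)
  (funF : ∀ p ∈ F, ∀ q ∈ F, p.1 = q.1 → p.2 = q.2)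
  (injF : ∀ p ∈ F, ∀ q ∈ F, p.2 = q.2 → p.1 = q.1)
  (isoF : ∀ p ∈ F, ∀ q ∈ F, (E p.1 q.1 ↔ E p.2 q.2))
  (extF : ∀ a : Λ, ((a : V), (e a : V)) ∈ F)
  (lamS : Λ ⊆ S)
  (preS : ((SimpleGraph.fromRel E).induce S).Preconnected)
  (preS' : ((SimpleGraph.fromRel E).induce (imgF F)).Preconnected)
  (cloS : ∀ D, IsBlockOf (SimpleGraph.fromRel E) D →
    ∀ x ∈ D ∩ S, ∀ y ∈ D ∩ S, x ≠ y → D ⊆ S)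
  (cloS' : ∀ D, IsBlockOf (SimpleGraph.fromRel E) D →
    ∀ x ∈ D ∩ imgF F, ∀ y ∈ D ∩ imgF F, x ≠ y → D ⊆ imgF F)
  (mTy : ∀ m ∈ M, IsBlockOf (SimpleGraph.fromRel E) m.1 ∧
      IsBlockOf (SimpleGraph.fromRel E) m.2 ∧
      ((m.1 ⊆ S ∧ m.2 ⊆ imgF F) ∨
        ∃ c y, (c, y) ∈ F ∧ m.1 ∩ S = {c} ∧ m.2 ∩ imgF F = {y}))
  (mFun : ∀ m ∈ M, ∀ m' ∈ M, m.1 = m'.1 → m.2 = m'.2)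
  (mInj : ∀ m ∈ M, ∀ m' ∈ M, m.2 = m'.2 → m.1 = m'.1)
  (mTot : ∀ D, IsBlockOf (SimpleGraph.fromRel E) D → ∀ c ∈ D ∩ S, ¬ D ⊆ S →
    ∃ D', (D, D') ∈ M)
  (mTot' : ∀ D', IsBlockOf (SimpleGraph.fromRel E) D' → ∀ c ∈ D' ∩ imgF F,
    ¬ D' ⊆ imgF F → ∃ D, (D, D') ∈ M)

/-- The base system. -/
lemma base_system
    (hvt : ∀ a b : V, ∃ g : Equiv.Perm V, DPreserves E g ∧ g a = b)
    (hΛ : IsBlockOf (SimpleGraph.fromRel E) Λ)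
    (he : e ∈ BlockAut E Λ) :
    ∃ F M, IsSys E Λ e Λ F M := by
  classical
  set Γ' := SimpleGraph.fromRel E
  set F0 : Set (V × V) := {p | ∃ ha : p.1 ∈ Λ, p.2 = (e ⟨p.1, ha⟩ : V)} with hF0
  set M0 : Set (Set V × Set V) :=
    {m | ∃ d : Λ, m ∈ pairsAt hvt (d : V) (e d : V) ⟨Λ, hΛ, d.2⟩ ⟨Λ, hΛ, (e d).2⟩}
    with hM0
  have himg : imgF F0 = Λ := by
    ext y
    constructor
    · rintro ⟨x, hx, h⟩
      have : (x, y).2 = y := rfl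
      rw [this] at h
      rw [h]
      exact (e ⟨x, hx⟩).2
    · intro hy
      exact ⟨(e.symm ⟨y, hy⟩ : V), (e.symm ⟨y, hy⟩).2, by simp⟩
  have hroot : ∀ (D : Set V), IsBlockOf Γ' D → ∀ d : V, d ∈ D → d ∈ Λ → D ≠ Λ →
      D ∩ Λ = {d} := by
    intro D hD d hdD hdΛ hne
    ext x
    constructor
    · rintro ⟨hxD, hxΛ⟩
      by_contra hxd
      exact hne (block_eq_block hD hΛ hxD hxΛ hdD hdΛ hxd)
    · rintro rfl
      exact ⟨hdD, hdΛ⟩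
  refine ⟨F0, M0, ?_⟩
  constructor
  · rintro ⟨x, y⟩ ⟨ha, h⟩
    exact ha
  · intro x hx
    exact ⟨(e ⟨x, hx⟩ : V), hx, rfl⟩
  · rintro ⟨x, y⟩ ⟨hx, hy⟩ ⟨x', y'⟩ ⟨hx', hy'⟩ h
    simp only at h hy hy' ⊢
    subst h
    rw [hy, hy']
  · rintro ⟨x, y⟩ ⟨hx, hy⟩ ⟨x', y'⟩ ⟨hx', hy'⟩ h
    simp only at h hy hy' ⊢
    have : e ⟨x, hx⟩ = e ⟨x', hx'⟩ := Subtype.ext (by rw [← hy, ← hy', h])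
    exact congrArg Subtype.val (e.injective this)
  · rintro ⟨x, y⟩ ⟨hx, hy⟩ ⟨x', y'⟩ ⟨hx', hy'⟩
    simp only at hy hy' ⊢
    rw [hy, hy']
    exact (he ⟨x, hx⟩ ⟨x', hx'⟩).symm
  · intro a
    exact ⟨a.2, by simp⟩
  · exact le_refl Λ
  · exact hΛ.1.preconnected
  · rw [himg]; exact hΛ.1.preconnected
  · intro D hD x hx y hy hxy
    have : D = Λ := block_eq_block hD hΛ hx.1 hx.2 hy.1 hy.2 hxy
    rw [this]
  · rw [himg]
    intro D hD x hx y hy hxy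
    have : D = Λ := block_eq_block hD hΛ hx.1 hx.2 hy.1 hy.2 hxy
    rw [this]
  · rintro m ⟨d, hm⟩
    obtain ⟨h1, h2, h3, h4, h5, h6⟩ := pairsAt_props hm
    refine ⟨h1, h4, Or.inr ⟨d, (e d : V), ⟨d.2, by simp⟩, ?_, ?_⟩⟩
    · exact hroot _ h1 _ h2 d.2 h3
    · rw [himg]
      exact hroot _ h4 _ h5 (e d).2 h6
  · rintro m ⟨d, hm⟩ m' ⟨d', hm'⟩ h1
    obtain ⟨g1, g2, g3, g4, g5, g6⟩ := pairsAt_props hm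
    obtain ⟨g1', g2', g3', g4', g5', g6'⟩ := pairsAt_props hm'
    have hdd : d = d' := by
      have e1 := hroot _ g1 _ g2 d.2 g3
      have e2 := hroot _ g1' _ g2' d'.2 g3'
      rw [h1] at e1
      have h3 : ({(d : V)} : Set V) = {(d' : V)} := e1.symm.trans e2
      exact Subtype.ext (Set.singleton_eq_singleton_iff.mp h3)
    subst hdd
    exact pairsAt_fun hm hm' h1
  · rintro m ⟨d, hm⟩ m' ⟨d', hm'⟩ h2
    obtain ⟨g1, g2, g3, g4, g5, g6⟩ := pairsAt_props hm
    obtain ⟨g1', g2', g3', g4', g5', g6'⟩ := pairsAt_props hm'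
    have hdd : d = d' := by
      have e1 := hroot _ g4 _ g5 (e d).2 g6
      have e2 := hroot _ g4' _ g5' (e d').2 g6'
      rw [h2] at e1
      have h3 : ({(e d : V)} : Set V) = {(e d' : V)} := e1.symm.trans e2
      exact e.injective (Subtype.ext (Set.singleton_eq_singleton_iff.mp h3))
    subst hdd
    exact pairsAt_inj hm hm' h2
  · rintro D hD c ⟨hcD, hcΛ⟩ hns
    have hne : D ≠ Λ := fun h => hns (h ▸ le_refl Λ)
    obtain ⟨D', hD'⟩ := pairsAt_tot (hvt := hvt)
      (Ba := ⟨Λ, hΛ, hcΛ⟩) (Bb := ⟨Λ, hΛ, (e ⟨c, hcΛ⟩).2⟩) hD hcD hne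
    exact ⟨D', ⟨⟨c, hcΛ⟩, hD'⟩⟩
  · rw [himg]
    rintro D' hD' c' ⟨hcD', hcΛ⟩ hns
    have hne : D' ≠ Λ := fun h => hns (h ▸ le_refl Λ)
    set d : Λ := e.symm ⟨c', hcΛ⟩ with hd
    have hed : (e d : V) = c' := by simp [hd]
    obtain ⟨D, hD⟩ := pairsAt_surj (hvt := hvt)
      (Ba := ⟨Λ, hΛ, d.2⟩) (Bb := ⟨Λ, hΛ, (e d).2⟩) hD' (hed ▸ hcD') hne
    exact ⟨D, ⟨d, hD⟩⟩

/-- Type of systems. -/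
abbrev SysT (V : Type*) := Set V × Set (V × V) × Set (Set V × Set V)

lemma chain_system
    (hblocks3 : ∀ B : Set V, IsBlockOf (SimpleGraph.fromRel E) B → HasThreeVertices B)
    {c : Set (SysT V)} (hsub : c ⊆ {t | IsSys E Λ e t.1 t.2.1 t.2.2})
    (hchain : IsChain (· ≤ ·) c) {y0 : SysT V} (hy0 : y0 ∈ c) :
    ∃ ub ∈ {t : SysT V | IsSys E Λ e t.1 t.2.1 t.2.2}, ∀ z ∈ c, z ≤ ub := by
  classical
  set SU : Set V := {x | ∃ t ∈ c, x ∈ t.1} with hSU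
  set FU : Set (V × V) := {p | ∃ t ∈ c, p ∈ t.2.1} with hFU
  set MU : Set (Set V × Set V) := {m | ∃ t ∈ c, m ∈ t.2.2} with hMU
  have hle : ∀ t ∈ c, t ≤ (SU, FU, MU) := by
    intro t ht
    exact ⟨fun x hx => ⟨t, ht, hx⟩, fun p hp => ⟨t, ht, hp⟩, fun m hm => ⟨t, ht, hm⟩⟩
  have htot : ∀ t ∈ c, ∀ u ∈ c, (t.1 ⊆ u.1 ∧ t.2.1 ⊆ u.2.1 ∧ t.2.2 ⊆ u.2.2) ∨
      (u.1 ⊆ t.1 ∧ u.2.1 ⊆ t.2.1 ∧ u.2.2 ⊆ t.2.2) := by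
    intro t ht u hu
    by_cases htu : t = u
    · subst htu; exact Or.inl ⟨le_refl _, le_refl _, le_refl _⟩
    rcases hchain ht hu htu with h | h
    · exact Or.inl ⟨h.1, h.2.1, h.2.2⟩
    · exact Or.inr ⟨h.1, h.2.1, h.2.2⟩
  have himgU : imgF FU = {y | ∃ t ∈ c, y ∈ imgF t.2.1} := by
    ext y
    constructor
    · rintro ⟨x, t, ht, hx⟩
      exact ⟨t, ht, x, hx⟩
    · rintro ⟨t, ht, x, hx⟩
      exact ⟨x, t, ht, hx⟩
  have himgUle : ∀ t ∈ c, imgF t.2.1 ⊆ imgF FU := by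
    rintro t ht z ⟨x, hx⟩
    exact ⟨x, t, ht, hx⟩
  have hy0sys := hsub hy0
  refine ⟨(SU, FU, MU), ?_, hle⟩
  constructor
  · rintro p ⟨t, ht, hp⟩
    exact ⟨t, ht, (hsub ht).domF p hp⟩
  · rintro x ⟨t, ht, hx⟩
    obtain ⟨y, hy⟩ := (hsub ht).totF x hx
    exact ⟨y, t, ht, hy⟩
  · rintro p ⟨t, ht, hp⟩ q ⟨u, hu, hq⟩ h
    rcases htot t ht u hu with ⟨_, h2, _⟩ | ⟨_, h2, _⟩
    · exact (hsub hu).funF p (h2 hp) q hq h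
    · exact (hsub ht).funF p hp q (h2 hq) h
  · rintro p ⟨t, ht, hp⟩ q ⟨u, hu, hq⟩ h
    rcases htot t ht u hu with ⟨_, h2, _⟩ | ⟨_, h2, _⟩
    · exact (hsub hu).injF p (h2 hp) q hq h
    · exact (hsub ht).injF p hp q (h2 hq) h
  · rintro p ⟨t, ht, hp⟩ q ⟨u, hu, hq⟩
    rcases htot t ht u hu with ⟨_, h2, _⟩ | ⟨_, h2, _⟩
    · exact (hsub hu).isoF p (h2 hp) q hq
    · exact (hsub ht).isoF p hp q (h2 hq)
  · intro a
    exact ⟨y0, hy0, hy0sys.extF a⟩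
  · intro a ha
    exact ⟨y0, hy0, hy0sys.lamS ha⟩
  · rintro ⟨u, hu⟩ ⟨v, hv⟩
    obtain ⟨t1, ht1, hu1⟩ := hu
    obtain ⟨t2, ht2, hv2⟩ := hv
    rcases htot t1 ht1 t2 ht2 with ⟨h1, _, _⟩ | ⟨h1, _, _⟩
    · exact reach_mono (show t2.1 ⊆ SU from fun x hx => ⟨t2, ht2, hx⟩) _ _
        ((hsub ht2).preS ⟨u, h1 hu1⟩ ⟨v, hv2⟩)
    · exact reach_mono (show t1.1 ⊆ SU from fun x hx => ⟨t1, ht1, hx⟩) _ _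
        ((hsub ht1).preS ⟨u, hu1⟩ ⟨v, h1 hv2⟩)
  · rintro ⟨u, hu⟩ ⟨v, hv⟩
    rw [himgU] at hu hv
    obtain ⟨t1, ht1, hu1⟩ := hu
    obtain ⟨t2, ht2, hv2⟩ := hv
    rcases htot t1 ht1 t2 ht2 with ⟨_, h1, _⟩ | ⟨_, h1, _⟩
    · have : imgF t1.2.1 ⊆ imgF t2.2.1 := by
        rintro z ⟨x, hx⟩; exact ⟨x, h1 hx⟩
      exact reach_mono (himgUle t2 ht2) _ _ ((hsub ht2).preS' ⟨u, this hu1⟩ ⟨v, hv2⟩)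
    · have : imgF t2.2.1 ⊆ imgF t1.2.1 := by
        rintro z ⟨x, hx⟩; exact ⟨x, h1 hx⟩
      exact reach_mono (himgUle t1 ht1) _ _ ((hsub ht1).preS' ⟨u, hu1⟩ ⟨v, this hv2⟩)
  · rintro D hD x ⟨hxD, t1, ht1, hx1⟩ y ⟨hyD, t2, ht2, hy2⟩ hxy
    rcases htot t1 ht1 t2 ht2 with ⟨h1, _, _⟩ | ⟨h1, _, _⟩
    · intro z hz
      exact ⟨t2, ht2, (hsub ht2).cloS D hD x ⟨hxD, h1 hx1⟩ y ⟨hyD, hy2⟩ hxy hz⟩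
    · intro z hz
      exact ⟨t1, ht1, (hsub ht1).cloS D hD x ⟨hxD, hx1⟩ y ⟨hyD, h1 hy2⟩ hxy hz⟩
  · rintro D hD x ⟨hxD, hx⟩ y ⟨hyD, hy⟩ hxy
    rw [himgU] at hx hy
    obtain ⟨t1, ht1, hx1⟩ := hx
    obtain ⟨t2, ht2, hy2⟩ := hy
    rcases htot t1 ht1 t2 ht2 with ⟨_, h1, _⟩ | ⟨_, h1, _⟩
    · have himg12 : imgF t1.2.1 ⊆ imgF t2.2.1 := by
        rintro z ⟨x', hx'⟩; exact ⟨x', h1 hx'⟩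
      exact fun z hz => himgUle t2 ht2
        ((hsub ht2).cloS' D hD x ⟨hxD, himg12 hx1⟩ y ⟨hyD, hy2⟩ hxy hz)
    · have himg21 : imgF t2.2.1 ⊆ imgF t1.2.1 := by
        rintro z ⟨x', hx'⟩; exact ⟨x', h1 hx'⟩
      exact fun z hz => himgUle t1 ht1
        ((hsub ht1).cloS' D hD x ⟨hxD, hx1⟩ y ⟨hyD, himg21 hy2⟩ hxy hz)
  · -- mTy
    rintro m ⟨t, ht, hm⟩
    obtain ⟨hm1, hm2, hcase⟩ := (hsub ht).mTy m hm
    refine ⟨hm1, hm2, ?_⟩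
    rcases hcase with ⟨hl, hr⟩ | ⟨c0, y0', hF, hroot1, hroot2⟩
    · exact Or.inl ⟨fun z hz => ⟨t, ht, hl hz⟩, fun z hz => himgUle t ht (hr hz)⟩
    by_cases hlive : ∀ z, z ∈ m.1 ∩ SU → z = c0
    · -- still live
      have hc0m : c0 ∈ m.1 := by
        have : c0 ∈ m.1 ∩ t.1 := hroot1 ▸ rfl
        exact this.1
      have hc0S : c0 ∈ SU := ⟨t, ht, (hroot1 ▸ rfl : c0 ∈ m.1 ∩ t.1).2⟩
      refine Or.inr ⟨c0, y0', ⟨t, ht, hF⟩, ?_, ?_⟩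
      · ext z
        exact ⟨fun hz => hlive z hz, fun hz => hz ▸ ⟨hc0m, hc0S⟩⟩
      · -- image root stays singleton
        have hy0m : y0' ∈ m.2 := (hroot2 ▸ rfl : y0' ∈ m.2 ∩ imgF t.2.1).1
        have hy0i : y0' ∈ imgF FU :=
          himgUle t ht (hroot2 ▸ rfl : y0' ∈ m.2 ∩ imgF t.2.1).2
        ext z
        refine ⟨?_, fun hz => hz ▸ ⟨hy0m, hy0i⟩⟩
        rintro ⟨hzm, hzi⟩
        rw [himgU] at hzi
        obtain ⟨u, hu, hzu⟩ := hzi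
        rcases htot u hu t ht with ⟨_, h1, _⟩ | ⟨h1, h2, h3⟩
        · have : imgF u.2.1 ⊆ imgF t.2.1 := by
            rintro w ⟨x', hx'⟩; exact ⟨x', h1 hx'⟩
          have : z ∈ m.2 ∩ imgF t.2.1 := ⟨hzm, this hzu⟩
          rw [hroot2] at this
          exact this
        · -- t ≤ u ; show m is still live in u with the same root
          obtain ⟨hu1, hu2, hcaseu⟩ := (hsub hu).mTy m (h3 hm)
          rcases hcaseu with ⟨hl, _⟩ | ⟨cu, yu, hFu, hru1, hru2⟩
          · -- m.1 ⊆ u.1 : contradiction with liveness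
            obtain ⟨x1, x2, hx1, hx2, hx12⟩ := two_of_three (hblocks3 m.1 hm1)
            have e1 : x1 = c0 := hlive x1 ⟨hx1, ⟨u, hu, hl hx1⟩⟩
            have e2 : x2 = c0 := hlive x2 ⟨hx2, ⟨u, hu, hl hx2⟩⟩
            exact absurd (e1.trans e2.symm) hx12
          · have hcu : cu = c0 := by
              have : cu ∈ m.1 ∩ u.1 := hru1 ▸ rfl
              exact hlive cu ⟨this.1, ⟨u, hu, this.2⟩⟩
            subst hcu
            have hyu : yu = y0' := (hsub hu).funF _ hFu _ (h2 hF) rfl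
            subst hyu
            have : z ∈ m.2 ∩ imgF u.2.1 := ⟨hzm, hzu⟩
            rw [hru2] at this
            exact this
    · -- became consumed
      push_neg at hlive
      obtain ⟨z, ⟨hzm, u, hu, hzu⟩, hzc⟩ := hlive
      have hc0m : c0 ∈ m.1 ∧ c0 ∈ t.1 := by
        have : c0 ∈ m.1 ∩ t.1 := hroot1 ▸ rfl
        exact ⟨this.1, this.2⟩
      -- common upper bound w of t and u
      rcases htot t ht u hu with ⟨h1, h2, h3⟩ | ⟨h1, h2, h3⟩
      · -- w = u
        have hsubm : m.1 ⊆ u.1 := (hsub hu).cloS m.1 hm1 c0 ⟨hc0m.1, h1 hc0m.2⟩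
          z ⟨hzm, hzu⟩ (fun h => hzc h.symm)
        obtain ⟨_, _, hcaseu⟩ := (hsub hu).mTy m (h3 hm)
        rcases hcaseu with ⟨hl, hr⟩ | ⟨cu, yu, hFu, hru1, hru2⟩
        · exact Or.inl ⟨fun w hw => ⟨u, hu, hl hw⟩, fun w hw => himgUle u hu (hr hw)⟩
        · exfalso
          have h5 : m.1 ∩ u.1 = m.1 := Set.inter_eq_left.mpr hsubm
          rw [h5] at hru1
          obtain ⟨x1, x2, hx1, hx2, hx12⟩ := two_of_three (hblocks3 m.1 hm1)
          rw [hru1] at hx1 hx2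
          exact hx12 (hx1.trans hx2.symm)
      · -- w = t ; z ∈ u.1 contradiction? no: u ≤ t, so z ∈ t.1 already
        have hzt : z ∈ t.1 := h1 hzu
        have : z ∈ m.1 ∩ t.1 := ⟨hzm, hzt⟩
        rw [hroot1] at this
        exact absurd this hzc
  · rintro m ⟨t, ht, hm⟩ m' ⟨u, hu, hm'⟩ h
    rcases htot t ht u hu with ⟨_, _, h3⟩ | ⟨_, _, h3⟩
    · exact (hsub hu).mFun m (h3 hm) m' hm' h
    · exact (hsub ht).mFun m hm m' (h3 hm') h
  · rintro m ⟨t, ht, hm⟩ m' ⟨u, hu, hm'⟩ h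
    rcases htot t ht u hu with ⟨_, _, h3⟩ | ⟨_, _, h3⟩
    · exact (hsub hu).mInj m (h3 hm) m' hm' h
    · exact (hsub ht).mInj m hm m' (h3 hm') h
  · rintro D hD c0 ⟨hcD, t, ht, hct⟩ hns
    have hns' : ¬ D ⊆ t.1 := fun h => hns fun z hz => ⟨t, ht, h hz⟩
    obtain ⟨D', hD'⟩ := (hsub ht).mTot D hD c0 ⟨hcD, hct⟩ hns'
    exact ⟨D', t, ht, hD'⟩
  · rintro D' hD' c0 ⟨hcD, hci⟩ hns
    rw [himgU] at hci
    obtain ⟨t, ht, hct⟩ := hci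
    have hns' : ¬ D' ⊆ imgF t.2.1 := fun h => hns fun z hz => himgUle t ht (h hz)
    obtain ⟨D, hD⟩ := (hsub ht).mTot' D' hD' c0 ⟨hcD, hct⟩ hns'
    exact ⟨D, t, ht, hD⟩

lemma extend_system
    (hvt : ∀ a b : V, ∃ g : Equiv.Perm V, DPreserves E g ∧ g a = b)
    (hiso : ∀ B C : Set V, IsBlockOf (SimpleGraph.fromRel E) B →
      IsBlockOf (SimpleGraph.fromRel E) C → BlocksIsomorphic E B C)
    (hbvt : ∀ B : Set V, IsBlockOf (SimpleGraph.fromRel E) B →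
      ∀ a b : B, ∃ g ∈ BlockAut E B, g a = b)
    (hblocks3 : ∀ B : Set V, IsBlockOf (SimpleGraph.fromRel E) B → HasThreeVertices B)
    (hconn : (SimpleGraph.fromRel E).Preconnected)
    (hΛ : IsBlockOf (SimpleGraph.fromRel E) Λ)
    {S : Set V} {F : Set (V × V)} {M : Set (Set V × Set V)}
    (sys : IsSys E Λ e S F M) (hSV : S ≠ Set.univ) :
    ∃ t2 : SysT V, IsSys E Λ e t2.1 t2.2.1 t2.2.2 ∧
      (S, F, M) ≤ t2 ∧ S ≠ t2.1 := by
  classical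
  have hSne : S.Nonempty := by
    obtain ⟨x, hx⟩ := hΛ.goodSet.nonempty
    exact ⟨x, sys.lamS hx⟩
  obtain ⟨y, z, hyS, hzS, hadj⟩ := exists_boundary_edge hconn hSne hSV
  obtain ⟨B, hB, hyB, hzB⟩ := exists_block_of_adj hadj
  have hBnS : ¬ B ⊆ S := fun h => hzS (h hzB)
  have hBroot : B ∩ S = {y} := by
    ext x
    refine ⟨fun hx => ?_, fun hx => hx ▸ ⟨hyB, hyS⟩⟩
    by_contra hxy
    exact hBnS (sys.cloS B hB x hx y ⟨hyB, hyS⟩ hxy)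
  obtain ⟨y', hyF⟩ := sys.totF y hyS
  obtain ⟨B', hBB'⟩ := sys.mTot B hB y ⟨hyB, hyS⟩ hBnS
  obtain ⟨hB1, hB'blk, hcase⟩ := sys.mTy _ hBB'
  have hB'root : B' ∩ imgF F = {y'} := by
    rcases hcase with ⟨hl, _⟩ | ⟨c, w, hcwF, hr1, hr2⟩
    · exact absurd hl hBnS
    · have hc : c = y := by
        have : y ∈ ({c} : Set V) := hr1 ▸ (⟨hyB, hyS⟩ : y ∈ B ∩ S)
        exact this.symm
      subst hc
      have : w = y' := sys.funF _ hcwF _ hyF rfl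
      subst this
      exact hr2
  have hy'B' : y' ∈ B' := (hB'root ▸ rfl : y' ∈ B' ∩ imgF F).1
  have hy'i : y' ∈ imgF F := (hB'root ▸ rfl : y' ∈ B' ∩ imgF F).2
  have hB'ni : ¬ B' ⊆ imgF F := by
    intro h
    have : B' ∩ imgF F = B' := Set.inter_eq_left.mpr h
    rw [hB'root] at this
    obtain ⟨x1, x2, hx1, hx2, hx12⟩ := two_of_three (hblocks3 B' hB'blk)
    rw [← this] at hx1 hx2
    exact hx12 (hx1.trans hx2.symm)
  obtain ⟨ψ, hψiso, hψy⟩ := exists_rooted_iso hiso hbvt hB hB'blk hyB hy'B'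
  -- key no-cycle facts
  have fact1 : ∀ D q s0, IsBlockOf (SimpleGraph.fromRel E) D → q ∈ D → q ∈ B →
      q ∉ S → s0 ∈ D → s0 ∈ S → D = B :=
    fun D q s0 hD hqD hqB' hqS hsD hsS =>
      block_cycle_free sys.preS hB hD hyB hyS hqB' hqD hqS hsD hsS
  have fact1' : ∀ D q s0, IsBlockOf (SimpleGraph.fromRel E) D → q ∈ D → q ∈ B' →
      q ∉ imgF F → s0 ∈ D → s0 ∈ imgF F → D = B' :=
    fun D q s0 hD hqD hqB' hqS hsD hsS =>
      block_cycle_free sys.preS' hB'blk hD hy'B' hy'i hqB' hqD hqS hsD hsS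
  have noE : ∀ u w, u ∈ S → u ∉ B → w ∈ B → w ∉ S → ¬ E u w ∧ ¬ E w u := by
    intro u w huS huB hwB hwS
    have key : ¬ (SimpleGraph.fromRel E).Adj u w := by
      intro hA
      obtain ⟨D, hD, huD, hwD⟩ := exists_block_of_adj hA
      exact huB ((fact1 D w u hD hwD hwB hwS huD huS) ▸ huD)
    have hne : u ≠ w := fun h => hwS (h ▸ huS)
    exact ⟨fun hE => key ((SimpleGraph.fromRel_adj E u w).mpr ⟨hne, Or.inl hE⟩),
      fun hE => key ((SimpleGraph.fromRel_adj E u w).mpr ⟨hne, Or.inr hE⟩)⟩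
  have noE' : ∀ u w, u ∈ imgF F → u ∉ B' → w ∈ B' → w ∉ imgF F →
      ¬ E u w ∧ ¬ E w u := by
    intro u w huS huB hwB hwS
    have key : ¬ (SimpleGraph.fromRel E).Adj u w := by
      intro hA
      obtain ⟨D, hD, huD, hwD⟩ := exists_block_of_adj hA
      exact huB ((fact1' D w u hD hwD hwB hwS huD huS) ▸ huD)
    have hne : u ≠ w := fun h => hwS (h ▸ huS)
    exact ⟨fun hE => key ((SimpleGraph.fromRel_adj E u w).mpr ⟨hne, Or.inl hE⟩),
      fun hE => key ((SimpleGraph.fromRel_adj E u w).mpr ⟨hne, Or.inr hE⟩)⟩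
  -- the new objects
  set S2 : Set V := S ∪ B with hS2
  set FB : Set (V × V) := {p | ∃ hb : p.1 ∈ B, p.2 = (ψ ⟨p.1, hb⟩ : V)} with hFB
  set F2 : Set (V × V) := F ∪ FB with hF2
  set MB : Set (Set V × Set V) := {m | ∃ (d : V) (hd : d ∈ B), d ≠ y ∧
    m ∈ pairsAt hvt d (ψ ⟨d, hd⟩ : V) ⟨B, hB, hd⟩ ⟨B', hB'blk, (ψ ⟨d, hd⟩).2⟩} with hMB
  set M2 : Set (Set V × Set V) := M ∪ MB with hM2
  have himgFB : imgF FB = B' := by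
    ext w
    constructor
    · rintro ⟨x, hx, h⟩
      have : (x, w).2 = w := rfl
      rw [this] at h
      rw [h]
      exact (ψ ⟨x, hx⟩).2
    · intro hw
      refine ⟨((ψ.symm ⟨w, hw⟩ : B) : V), (ψ.symm ⟨w, hw⟩).2, ?_⟩
      show w = _
      rw [show (⟨((ψ.symm ⟨w, hw⟩ : B) : V), _⟩ : B) = ψ.symm ⟨w, hw⟩ from Subtype.ext rfl]
      rw [ψ.apply_symm_apply]
  have himg2 : imgF F2 = imgF F ∪ B' := by
    rw [← himgFB]
    ext w
    constructor
    · rintro ⟨x, hx | hx⟩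
      · exact Or.inl ⟨x, hx⟩
      · exact Or.inr ⟨x, hx⟩
    · rintro (⟨x, hx⟩ | ⟨x, hx⟩)
      · exact ⟨x, Or.inl hx⟩
      · exact ⟨x, Or.inr hx⟩
  -- membership helpers
  have hFBmem : ∀ (d : V) (hd : d ∈ B), (d, (ψ ⟨d, hd⟩ : V)) ∈ FB :=
    fun d hd => ⟨hd, rfl⟩
  have hynotB : ∀ x, x ∈ B → x ∉ S → x ≠ y := fun x _ hxS h => hxS (h ▸ hyS)
  have hψne : ∀ (d : V) (hd : d ∈ B), d ≠ y → (ψ ⟨d, hd⟩ : V) ≠ y' := by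
    intro d hd hdy h
    have : ψ ⟨d, hd⟩ = ψ ⟨y, hyB⟩ := Subtype.ext (h.trans hψy.symm)
    exact hdy (congrArg Subtype.val (ψ.injective this))
  have hψinB' : ∀ (d : V) (hd : d ∈ B), (ψ ⟨d, hd⟩ : V) ∈ B' := fun d hd => (ψ ⟨d, hd⟩).2
  have hψnotimg : ∀ (d : V) (hd : d ∈ B), d ≠ y → (ψ ⟨d, hd⟩ : V) ∉ imgF F := by
    intro d hd hdy h
    have : (ψ ⟨d, hd⟩ : V) ∈ B' ∩ imgF F := ⟨hψinB' d hd, h⟩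
    rw [hB'root] at this
    exact hψne d hd hdy this
  have hdnotS : ∀ (d : V), d ∈ B → d ≠ y → d ∉ S := by
    intro d hd hdy hdS
    have : d ∈ B ∩ S := ⟨hd, hdS⟩
    rw [hBroot] at this
    exact hdy this
  -- claim A : root facts for new blocks
  have factA : ∀ D, IsBlockOf (SimpleGraph.fromRel E) D → D ≠ B → ∀ d, d ∈ D → d ∈ B →
      d ≠ y → D ∩ S2 = {d} ∧ ¬ D ⊆ S2 := by
    intro D hD hDB d hdD hdB hdy
    have hdS : d ∉ S := hdnotS d hdB hdy
    have hroot : D ∩ S2 = {d} := by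
      ext x
      refine ⟨?_, fun hx => hx ▸ ⟨hdD, Or.inr hdB⟩⟩
      rintro ⟨hxD, hxS | hxB⟩
      · exact absurd (fact1 D d x hD hdD hdB hdS hxD hxS) hDB
      · by_contra hxd
        exact hDB (block_eq_block hD hB hxD hxB hdD hdB hxd)
    refine ⟨hroot, fun h => ?_⟩
    obtain ⟨x1, x2, hx1, hx2, hx12⟩ := two_of_three (hblocks3 D hD)
    have e1 : x1 ∈ D ∩ S2 := ⟨hx1, h hx1⟩
    have e2 : x2 ∈ D ∩ S2 := ⟨hx2, h hx2⟩
    rw [hroot] at e1 e2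
    exact hx12 (e1.trans e2.symm)
  have factA' : ∀ D, IsBlockOf (SimpleGraph.fromRel E) D → D ≠ B' → ∀ d, d ∈ D →
      d ∈ B' → d ≠ y' → D ∩ imgF F2 = {d} ∧ ¬ D ⊆ imgF F2 := by
    intro D hD hDB d hdD hdB hdy
    have hdS : d ∉ imgF F := by
      intro h
      have : d ∈ B' ∩ imgF F := ⟨hdB, h⟩
      rw [hB'root] at this
      exact hdy this
    have hroot : D ∩ imgF F2 = {d} := by
      rw [himg2]
      ext x
      refine ⟨?_, fun hx => hx ▸ ⟨hdD, Or.inr hdB⟩⟩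
      rintro ⟨hxD, hxS | hxB⟩
      · exact absurd (fact1' D d x hD hdD hdB hdS hxD hxS) hDB
      · by_contra hxd
        exact hDB (block_eq_block hD hB'blk hxD hxB hdD hdB hxd)
    refine ⟨hroot, fun h => ?_⟩
    obtain ⟨x1, x2, hx1, hx2, hx12⟩ := two_of_three (hblocks3 D hD)
    have e1 : x1 ∈ D ∩ imgF F2 := ⟨hx1, h hx1⟩
    have e2 : x2 ∈ D ∩ imgF F2 := ⟨hx2, h hx2⟩
    rw [hroot] at e1 e2
    exact hx12 (e1.trans e2.symm)
  -- mixed iso fact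
  have hmix : ∀ p ∈ F, ∀ (d : V) (hd : d ∈ B),
      (E p.1 d ↔ E p.2 (ψ ⟨d, hd⟩ : V)) ∧ (E d p.1 ↔ E (ψ ⟨d, hd⟩ : V) p.2) := by
    intro p hp d hd
    by_cases hdy : d = y
    · subst hdy
      have hrw : (ψ ⟨d, hd⟩ : V) = y' := hψy
      rw [hrw]
      exact ⟨sys.isoF p hp (d, y') hyF, sys.isoF (d, y') hyF p hp⟩
    · by_cases hpy : p.1 = y
      · have hp2 : p.2 = y' := sys.funF p hp (y, y') hyF hpy
        have h1 := hψiso ⟨y, hyB⟩ ⟨d, hd⟩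
        have h2 := hψiso ⟨d, hd⟩ ⟨y, hyB⟩
        rw [hψy] at h1 h2
        rw [hpy, hp2]
        exact ⟨h1, h2⟩
      · -- no edges on either side
        have hp1S : p.1 ∈ S := sys.domF p hp
        have hp1B : p.1 ∉ B := by
          intro h
          have : p.1 ∈ B ∩ S := ⟨h, hp1S⟩
          rw [hBroot] at this
          exact hpy this
        have hdS : d ∉ S := hdnotS d hd hdy
        have hne := noE p.1 d hp1S hp1B hd hdS
        have hp2i : p.2 ∈ imgF F := ⟨p.1, hp⟩
        have hp2B' : p.2 ∉ B' := by
          intro h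
          have : p.2 ∈ B' ∩ imgF F := ⟨h, hp2i⟩
          rw [hB'root] at this
          exact hpy (sys.injF p hp (y, y') hyF this)
        have hne' := noE' p.2 (ψ ⟨d, hd⟩ : V) hp2i hp2B' (hψinB' d hd)
          (hψnotimg d hd hdy)
        exact ⟨iff_of_false hne.1 hne'.1, iff_of_false hne.2 hne'.2⟩
  refine ⟨(S2, F2, M2), ?_, ⟨Set.subset_union_left,
    Set.subset_union_left, Set.subset_union_left⟩, fun h => hzS (h ▸ (Or.inr hzB))⟩
  constructor
  · rintro p (hp | ⟨hb, _⟩)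
    · exact Or.inl (sys.domF p hp)
    · exact Or.inr hb
  · rintro x (hx | hx)
    · obtain ⟨w, hw⟩ := sys.totF x hx
      exact ⟨w, Or.inl hw⟩
    · exact ⟨(ψ ⟨x, hx⟩ : V), Or.inr (hFBmem x hx)⟩
  · -- funF
    rintro p (hp | ⟨hb, hp2⟩) q (hq | ⟨hb', hq2⟩) h
    · exact sys.funF p hp q hq h
    · -- p old, q new
      have hq1y : q.1 = y := by
        have : q.1 ∈ B ∩ S := ⟨hb', h ▸ sys.domF p hp⟩
        rw [hBroot] at this
        exact this
      have : p.2 = y' := sys.funF p hp (y, y') hyF (h.trans hq1y)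
      rw [this, hq2]
      have : (⟨q.1, hb'⟩ : B) = ⟨y, hyB⟩ := Subtype.ext hq1y
      rw [this, hψy]
    · have hp1y : p.1 = y := by
        have : p.1 ∈ B ∩ S := ⟨hb, h ▸ sys.domF q hq⟩
        rw [hBroot] at this
        exact this
      have hqy : q.2 = y' := sys.funF q hq (y, y') hyF (h ▸ hp1y)
      rw [hqy, hp2]
      have : (⟨p.1, hb⟩ : B) = ⟨y, hyB⟩ := Subtype.ext hp1y
      rw [this, hψy]
    · rw [hp2, hq2]
      congr 2
      exact Subtype.ext h
  · -- injF
    rintro p (hp | ⟨hb, hp2⟩) q (hq | ⟨hb', hq2⟩) h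
    · exact sys.injF p hp q hq h
    · -- p old, q new : p.2 = ψ q.1
      have h1 : p.2 ∈ B' ∩ imgF F := ⟨by rw [h, hq2]; exact hψinB' q.1 hb', ⟨p.1, hp⟩⟩
      rw [hB'root] at h1
      have hp1y : p.1 = y := sys.injF p hp (y, y') hyF h1
      have : (ψ ⟨q.1, hb'⟩ : V) = y' := by rw [← hq2, ← h, h1]
      have hq1y : q.1 = y := by
        have := ψ.injective (Subtype.ext (this.trans hψy.symm))
        exact congrArg Subtype.val this
      rw [hp1y, hq1y]
    · have h1 : q.2 ∈ B' ∩ imgF F := ⟨by rw [← h, hp2]; exact hψinB' p.1 hb, ⟨q.1, hq⟩⟩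
      rw [hB'root] at h1
      have hq1y : q.1 = y := sys.injF q hq (y, y') hyF h1
      have : (ψ ⟨p.1, hb⟩ : V) = y' := by rw [← hp2, h, h1]
      have hp1y : p.1 = y := by
        have := ψ.injective (Subtype.ext (this.trans hψy.symm))
        exact congrArg Subtype.val this
      rw [hp1y, hq1y]
    · rw [hp2, hq2] at h
      have := ψ.injective (Subtype.ext h)
      exact congrArg Subtype.val this
  · -- isoF
    rintro p (hp | ⟨hb, hp2⟩) q (hq | ⟨hb', hq2⟩)
    · exact sys.isoF p hp q hq
    · rw [hq2]
      exact (hmix p hp q.1 hb').1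
    · rw [hp2]
      exact (hmix q hq p.1 hb).2
    · rw [hp2, hq2]
      exact hψiso ⟨p.1, hb⟩ ⟨q.1, hb'⟩
  · intro a
    exact Or.inl (sys.extF a)
  · exact fun x hx => Or.inl (sys.lamS hx)
  · exact precon_union sys.preS hB.1.preconnected hyS hyB
  · rw [himg2]
    exact precon_union sys.preS' hB'blk.1.preconnected hy'i hy'B'
  · -- cloS
    intro D hD x hx x2 hx2 hxx2
    by_cases hq : ∃ q, q ∈ D ∧ q ∈ B ∧ q ∉ S
    · obtain ⟨q, hqD, hqB', hqS⟩ := hq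
      by_cases hs : ∃ s0, s0 ∈ D ∧ s0 ∈ S
      · obtain ⟨s0, hsD, hsS⟩ := hs
        rw [fact1 D q s0 hD hqD hqB' hqS hsD hsS]
        exact Set.subset_union_right
      · push_neg at hs
        have hxB : x ∈ B := by
          rcases hx.2 with h | h
          · exact absurd h (hs x hx.1)
          · exact h
        have hx2B : x2 ∈ B := by
          rcases hx2.2 with h | h
          · exact absurd h (hs x2 hx2.1)
          · exact h
        rw [block_eq_block hD hB hx.1 hxB hx2.1 hx2B hxx2]
        exact Set.subset_union_right
    · push_neg at hq
      have hxS : x ∈ S := by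
        rcases hx.2 with h | h
        · exact h
        · exact hq x hx.1 h
      have hx2S : x2 ∈ S := by
        rcases hx2.2 with h | h
        · exact h
        · exact hq x2 hx2.1 h
      exact (sys.cloS D hD x ⟨hx.1, hxS⟩ x2 ⟨hx2.1, hx2S⟩ hxx2).trans
        Set.subset_union_left
  · -- cloS'
    intro D hD x hx x2 hx2 hxx2
    rw [himg2] at hx hx2 ⊢
    by_cases hq : ∃ q, q ∈ D ∧ q ∈ B' ∧ q ∉ imgF F
    · obtain ⟨q, hqD, hqB', hqS⟩ := hq
      by_cases hs : ∃ s0, s0 ∈ D ∧ s0 ∈ imgF F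
      · obtain ⟨s0, hsD, hsS⟩ := hs
        rw [fact1' D q s0 hD hqD hqB' hqS hsD hsS]
        exact Set.subset_union_right
      · push_neg at hs
        have hxB : x ∈ B' := by
          rcases hx.2 with h | h
          · exact absurd h (hs x hx.1)
          · exact h
        have hx2B : x2 ∈ B' := by
          rcases hx2.2 with h | h
          · exact absurd h (hs x2 hx2.1)
          · exact h
        rw [block_eq_block hD hB'blk hx.1 hxB hx2.1 hx2B hxx2]
        exact Set.subset_union_right
    · push_neg at hq
      have hxS : x ∈ imgF F := by
        rcases hx.2 with h | h
        · exact h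
        · exact hq x hx.1 h
      have hx2S : x2 ∈ imgF F := by
        rcases hx2.2 with h | h
        · exact h
        · exact hq x2 hx2.1 h
      exact (sys.cloS' D hD x ⟨hx.1, hxS⟩ x2 ⟨hx2.1, hx2S⟩ hxx2).trans
        Set.subset_union_left
  · -- mTy
    rintro m (hm | ⟨d, hd, hdy, hmp⟩)
    · obtain ⟨hm1, hm2, hcasem⟩ := sys.mTy m hm
      refine ⟨hm1, hm2, ?_⟩
      rcases hcasem with ⟨hl, hr⟩ | ⟨c, w, hcw, hr1, hr2⟩
      · refine Or.inl ⟨hl.trans Set.subset_union_left, ?_⟩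
        rw [himg2]
        exact hr.trans Set.subset_union_left
      · by_cases hmB : m.1 = B
        · have hm2B : m.2 = B' := sys.mFun m hm (B, B') hBB' hmB
          refine Or.inl ⟨by rw [hmB]; exact Set.subset_union_right, ?_⟩
          rw [hm2B, himg2]
          exact Set.subset_union_right
        · have hc1 : c ∈ m.1 ∩ S := hr1 ▸ rfl
          have hm2B' : m.2 ≠ B' := fun h => hmB (sys.mInj m hm (B, B') hBB' h)
          have hc2 : w ∈ m.2 ∩ imgF F := hr2 ▸ rfl
          refine Or.inr ⟨c, w, Or.inl hcw, ?_, ?_⟩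
          · ext x
            refine ⟨?_, fun hx => hx ▸ ⟨hc1.1, Or.inl hc1.2⟩⟩
            rintro ⟨hxm, hxS | hxB⟩
            · exact hr1 ▸ (⟨hxm, hxS⟩ : x ∈ m.1 ∩ S)
            · by_cases hxS : x ∈ S
              · exact hr1 ▸ (⟨hxm, hxS⟩ : x ∈ m.1 ∩ S)
              · exact absurd (fact1 m.1 x c hm1 hxm hxB hxS hc1.1 hc1.2) hmB
          · rw [himg2]
            ext x
            refine ⟨?_, fun hx => hx ▸ ⟨hc2.1, Or.inl hc2.2⟩⟩
            rintro ⟨hxm, hxS | hxB⟩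
            · exact hr2 ▸ (⟨hxm, hxS⟩ : x ∈ m.2 ∩ imgF F)
            · by_cases hxi : x ∈ imgF F
              · exact hr2 ▸ (⟨hxm, hxi⟩ : x ∈ m.2 ∩ imgF F)
              · exact absurd (fact1' m.2 x w hm2 hxm hxB hxi hc2.1 hc2.2) hm2B'
    · obtain ⟨g1, g2, g3, g4, g5, g6⟩ := pairsAt_props hmp
      have hA := factA m.1 g1 g3 d g2 hd hdy
      have hA' := factA' m.2 g4 g6 (ψ ⟨d, hd⟩ : V) g5 (hψinB' d hd) (hψne d hd hdy)
      exact ⟨g1, g4, Or.inr ⟨d, (ψ ⟨d, hd⟩ : V), Or.inr (hFBmem d hd), hA.1, hA'.1⟩⟩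
  · -- mFun
    rintro m (hm | ⟨d, hd, hdy, hmp⟩) m' (hm' | ⟨d', hd', hdy', hmp'⟩) h1
    · exact sys.mFun m hm m' hm' h1
    · exfalso
      obtain ⟨g1', g2', g3', g4', g5', g6'⟩ := pairsAt_props hmp'
      have hd'S : d' ∉ S := hdnotS d' hd' hdy'
      have hd'm : d' ∈ m.1 := h1.symm ▸ g2'
      obtain ⟨hm1, hm2, hcasem⟩ := sys.mTy m hm
      rcases hcasem with ⟨hl, _⟩ | ⟨c, w, hcw, hr1, hr2⟩
      · exact hd'S (hl hd'm)
      · have hc1 : c ∈ m.1 ∩ S := hr1 ▸ rfl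
        exact g3' (h1 ▸ (fact1 m.1 d' c hm1 hd'm hd' hd'S hc1.1 hc1.2))
    · exfalso
      obtain ⟨g1, g2, g3, g4, g5, g6⟩ := pairsAt_props hmp
      have hdS : d ∉ S := hdnotS d hd hdy
      have hdm : d ∈ m'.1 := h1 ▸ g2
      obtain ⟨hm1, hm2, hcasem⟩ := sys.mTy m' hm'
      rcases hcasem with ⟨hl, _⟩ | ⟨c, w, hcw, hr1, hr2⟩
      · exact hdS (hl hdm)
      · have hc1 : c ∈ m'.1 ∩ S := hr1 ▸ rfl
        exact g3 (h1.symm ▸ (fact1 m'.1 d c hm1 hdm hd hdS hc1.1 hc1.2))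
    · obtain ⟨g1, g2, g3, g4, g5, g6⟩ := pairsAt_props hmp
      obtain ⟨g1', g2', g3', g4', g5', g6'⟩ := pairsAt_props hmp'
      have hA := factA m.1 g1 g3 d g2 hd hdy
      have hA' := factA m'.1 g1' g3' d' g2' hd' hdy'
      have hdd : d = d' := by
        have : d ∈ m'.1 ∩ S2 := ⟨h1 ▸ g2, Or.inr hd⟩
        rw [hA'.1] at this
        exact this
      subst hdd
      exact pairsAt_fun hmp hmp' h1
  · -- mInj
    rintro m (hm | ⟨d, hd, hdy, hmp⟩) m' (hm' | ⟨d', hd', hdy', hmp'⟩) h2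
    · exact sys.mInj m hm m' hm' h2
    · exfalso
      obtain ⟨g1', g2', g3', g4', g5', g6'⟩ := pairsAt_props hmp'
      have hdi : (ψ ⟨d', hd'⟩ : V) ∉ imgF F := hψnotimg d' hd' hdy'
      have hdm : (ψ ⟨d', hd'⟩ : V) ∈ m.2 := h2.symm ▸ g5'
      obtain ⟨hm1, hm2, hcasem⟩ := sys.mTy m hm
      rcases hcasem with ⟨_, hr⟩ | ⟨c, w, hcw, hr1, hr2⟩
      · exact hdi (hr hdm)
      · have hc2 : w ∈ m.2 ∩ imgF F := hr2 ▸ rfl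
        exact g6' (h2 ▸ (fact1' m.2 (ψ ⟨d', hd'⟩ : V) w hm2 hdm
          (hψinB' d' hd') hdi hc2.1 hc2.2))
    · exfalso
      obtain ⟨g1, g2, g3, g4, g5, g6⟩ := pairsAt_props hmp
      have hdi : (ψ ⟨d, hd⟩ : V) ∉ imgF F := hψnotimg d hd hdy
      have hdm : (ψ ⟨d, hd⟩ : V) ∈ m'.2 := h2 ▸ g5
      obtain ⟨hm1, hm2, hcasem⟩ := sys.mTy m' hm'
      rcases hcasem with ⟨_, hr⟩ | ⟨c, w, hcw, hr1, hr2⟩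
      · exact hdi (hr hdm)
      · have hc2 : w ∈ m'.2 ∩ imgF F := hr2 ▸ rfl
        exact g6 (h2.symm ▸ (fact1' m'.2 (ψ ⟨d, hd⟩ : V) w hm2 hdm
          (hψinB' d hd) hdi hc2.1 hc2.2))
    · obtain ⟨g1, g2, g3, g4, g5, g6⟩ := pairsAt_props hmp
      obtain ⟨g1', g2', g3', g4', g5', g6'⟩ := pairsAt_props hmp'
      have hA := factA' m.2 g4 g6 (ψ ⟨d, hd⟩ : V) g5 (hψinB' d hd) (hψne d hd hdy)
      have hA' := factA' m'.2 g4' g6' (ψ ⟨d', hd'⟩ : V) g5' (hψinB' d' hd')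
        (hψne d' hd' hdy')
      have hdd : d = d' := by
        have hmem : (ψ ⟨d, hd⟩ : V) ∈ m'.2 ∩ imgF F2 := by
          refine ⟨h2 ▸ g5, ?_⟩
          rw [himg2]
          exact Or.inr (hψinB' d hd)
        rw [hA'.1] at hmem
        have := ψ.injective (Subtype.ext hmem)
        exact congrArg Subtype.val this
      subst hdd
      exact pairsAt_inj hmp hmp' h2
  · -- mTot
    rintro D hD c ⟨hcD, hc2⟩ hns
    by_cases hcS : c ∈ S
    · have hns' : ¬ D ⊆ S := fun h => hns (h.trans Set.subset_union_left)
      obtain ⟨D', hD'⟩ := sys.mTot D hD c ⟨hcD, hcS⟩ hns'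
      exact ⟨D', Or.inl hD'⟩
    · have hcB : c ∈ B := by
        rcases hc2 with h | h
        · exact absurd h hcS
        · exact h
      have hcy : c ≠ y := fun h => hcS (h ▸ hyS)
      have hDB : D ≠ B := fun h => hns (h ▸ Set.subset_union_right)
      obtain ⟨D', hD'⟩ := pairsAt_tot (hvt := hvt) (Ba := ⟨B, hB, hcB⟩)
        (Bb := ⟨B', hB'blk, (ψ ⟨c, hcB⟩).2⟩) hD hcD hDB
      exact ⟨D', Or.inr ⟨c, hcB, hcy, hD'⟩⟩
  · -- mTot'
    rintro D' hD' c' ⟨hcD, hc2⟩ hns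
    by_cases hci : c' ∈ imgF F
    · have hns' : ¬ D' ⊆ imgF F := fun h => hns (by
        rw [himg2]
        exact h.trans Set.subset_union_left)
      obtain ⟨D, hDp⟩ := sys.mTot' D' hD' c' ⟨hcD, hci⟩ hns'
      exact ⟨D, Or.inl hDp⟩
    · have hcB' : c' ∈ B' := by
        rw [himg2] at hc2
        rcases hc2 with h | h
        · exact absurd h hci
        · exact h
      have hcy' : c' ≠ y' := fun h => hci (h ▸ hy'i)
      have hDB' : D' ≠ B' := fun h => hns (by
        rw [himg2, h]
        exact Set.subset_union_right)
      set d : ↥B := ψ.symm ⟨c', hcB'⟩ with hdd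
      have hdB : (d : V) ∈ B := d.2
      have hed : (ψ ⟨(d : V), hdB⟩ : V) = c' := by
        rw [show (⟨(d : V), hdB⟩ : ↥B) = d from Subtype.ext rfl, hdd,
          ψ.apply_symm_apply]
      have hdy : (d : V) ≠ y := by
        intro h
        apply hcy'
        rw [← hed]
        rw [show (⟨(d : V), hdB⟩ : ↥B) = ⟨y, hyB⟩ from Subtype.ext h]
        exact hψy
      obtain ⟨D, hDp⟩ := pairsAt_surj (hvt := hvt) (Ba := ⟨B, hB, hdB⟩)
        (Bb := ⟨B', hB'blk, (ψ ⟨(d : V), hdB⟩).2⟩) hD' (hed.symm ▸ hcD) hDB'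
      exact ⟨D, Or.inr ⟨(d : V), hdB, hdy, hDp⟩⟩
end Main
/-- In a vertex-transitive connectivity-one graph whose blocks are
vertex-transitive, pairwise isomorphic and have at least three vertices, every
automorphism of a block extends to an automorphism of the whole graph. -/
theorem stmt9 {V : Type*} (E : V → V → Prop)
    (hvt : ∀ a b : V, ∃ g : Equiv.Perm V, DPreserves E g ∧ g a = b)
    (hconn1 : HasConnOne (SimpleGraph.fromRel E))
    (hbvt : ∀ B : Set V, IsBlockOf (SimpleGraph.fromRel E) B →
      ∀ a b : B, ∃ e ∈ BlockAut E B, e a = b)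
    (hiso : ∀ B C : Set V, IsBlockOf (SimpleGraph.fromRel E) B →
      IsBlockOf (SimpleGraph.fromRel E) C → BlocksIsomorphic E B C)
    (hblocks3 : ∀ B : Set V, IsBlockOf (SimpleGraph.fromRel E) B → HasThreeVertices B)
    (Λ : Set V) (hΛ : IsBlockOf (SimpleGraph.fromRel E) Λ)
    (e : Equiv.Perm Λ) (he : e ∈ BlockAut E Λ) :
    ∃ g : Equiv.Perm V, DPreserves E g ∧ g '' Λ = Λ ∧
      ∀ (a : V) (ha : a ∈ Λ), g a = (e ⟨a, ha⟩ : V) := by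
  classical
  obtain ⟨F0, M0, hsys0⟩ := base_system hvt hΛ he
  have hchains : ∀ c ⊆ {t : SysT V | IsSys E Λ e t.1 t.2.1 t.2.2},
      IsChain (fun x1 x2 => x1 ≤ x2) c → ∀ y ∈ c,
      ∃ ub ∈ {t : SysT V | IsSys E Λ e t.1 t.2.1 t.2.2}, ∀ z ∈ c, z ≤ ub := by
    intro c hsubc hchain y0 hy0
    exact chain_system hblocks3 hsubc hchain hy0
  obtain ⟨m, _, hmax⟩ := zorn_le_nonempty₀ _ hchains (Λ, F0, M0) hsys0
  have hmsys : IsSys E Λ e m.1 m.2.1 m.2.2 := hmax.prop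
  have hconn : (SimpleGraph.fromRel E).Preconnected := hconn1.1.preconnected
  have hSuniv : m.1 = Set.univ := by
    by_contra hne
    obtain ⟨t2, ht2sys, hle, hneq⟩ :=
      extend_system hvt hiso hbvt hblocks3 hconn hΛ hmsys hne
    have hge := hmax.2 ht2sys hle
    exact hneq (le_antisymm hle.1 hge.1)
  have himg : imgF m.2.1 = Set.univ := by
    by_contra hne
    have himgne : (imgF m.2.1).Nonempty := by
      obtain ⟨x, hx⟩ := hΛ.goodSet.nonempty
      exact ⟨(e ⟨x, hx⟩ : V), x, hmsys.extF ⟨x, hx⟩⟩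
    obtain ⟨w, z, hwS, hzS, hadj⟩ := exists_boundary_edge hconn himgne hne
    obtain ⟨D', hD', hwD, hzD⟩ := exists_block_of_adj hadj
    have hns : ¬ D' ⊆ imgF m.2.1 := fun h => hzS (h hzD)
    obtain ⟨D, hDp⟩ := hmsys.mTot' D' hD' w ⟨hwD, hwS⟩ hns
    obtain ⟨h1, _, hcase⟩ := hmsys.mTy _ hDp
    rcases hcase with ⟨_, hr⟩ | ⟨c, w', _, hr1, _⟩
    · exact hns hr
    · have hD1 : D ⊆ {c} := by
        intro x hx
        rw [← hr1]
        exact ⟨hx, by rw [hSuniv]; trivial⟩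
      obtain ⟨x1, x2, hx1, hx2, hx12⟩ := two_of_three (hblocks3 D h1)
      exact hx12 ((hD1 hx1).trans (hD1 hx2).symm)
  have hmemS : ∀ x : V, x ∈ m.1 := by
    rw [hSuniv]
    exact fun x => trivial
  set f : V → V := fun x => (hmsys.totF x (hmemS x)).choose with hfdef
  have hf : ∀ x : V, (x, f x) ∈ m.2.1 := fun x => (hmsys.totF x (hmemS x)).choose_spec
  have hinj : Function.Injective f := by
    intro a b h
    exact hmsys.injF (a, f a) (hf a) (b, f b) (hf b) h
  have hsurj : Function.Surjective f := by
    intro w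
    have : w ∈ imgF m.2.1 := by rw [himg]; trivial
    obtain ⟨x, hx⟩ := this
    exact ⟨x, (hmsys.funF (x, f x) (hf x) (x, w) hx rfl)⟩
  set g : Equiv.Perm V := Equiv.ofBijective f ⟨hinj, hsurj⟩ with hgdef
  have hgf : ∀ x, g x = f x := fun x => rfl
  have hext : ∀ (a : V) (ha : a ∈ Λ), g a = (e ⟨a, ha⟩ : V) := by
    intro a ha
    rw [hgf]
    exact hmsys.funF (a, f a) (hf a) (a, (e ⟨a, ha⟩ : V)) (hmsys.extF ⟨a, ha⟩) rfl
  refine ⟨g, ?_, ?_, hext⟩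
  · intro a b
    exact (hmsys.isoF (a, f a) (hf a) (b, f b) (hf b)).symm
  · ext w
    constructor
    · rintro ⟨a, ha, rfl⟩
      rw [hext a ha]
      exact (e ⟨a, ha⟩).2
    · intro hw
      refine ⟨(e.symm ⟨w, hw⟩ : V), (e.symm ⟨w, hw⟩).2, ?_⟩
      rw [hext _ (e.symm ⟨w, hw⟩).2]
      rw [show (⟨((e.symm ⟨w, hw⟩ : Λ) : V), _⟩ : Λ) = e.symm ⟨w, hw⟩ from Subtype.ext rfl]
      rw [e.apply_symm_apply]
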